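/- arXiv:1307.6501 — 12 statements merged into one kernel-verified Lean document; each statement's English description precedes it below -/
import Mathlib

section
/- Let q : ℝ → ℝ be nondecreasing and positive, let ρ ≤ 0, and let g be a positive function with g(y)/q(y) → 0 as y → ∞, such that (q(yλ) − q(y))/g(y) → h_ρ(λ) for all λ > 0, where h_ρ(λ) = (λ^ρ − 1)/ρ for ρ ≠ 0 and h₀(λ) = log λ. Then with f(y) := g(y)/q(y), one has (log q(yλ) − log q(y))/f(y) → h_ρ(λ) for all λ > 0. -/
open Filter Real

noncomputable def h (ρ lam : ℝ) : ℝ := if ρ = 0 then Real.log lam else (lam ^ ρ - 1) / ρ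

/-- log(1+x)/x (with value 1 at 0) tends to 1 as x → 0. -/
lemma Llim : Tendsto (fun x : ℝ => if x = 0 then 1 else Real.log (1 + x) / x)
    (nhds 0) (nhds 1) := by
  have hd : HasDerivAt Real.log 1 1 := by
    simpa using Real.hasDerivAt_log one_ne_zero
  have hs : Tendsto (slope Real.log 1) (nhdsWithin 1 {(1:ℝ)}ᶜ) (nhds 1) :=
    hasDerivAt_iff_tendsto_slope.mp hd
  have hmap : Tendsto (fun x : ℝ => 1 + x) (nhdsWithin 0 {(0:ℝ)}ᶜ)
      (nhdsWithin 1 {(1:ℝ)}ᶜ) := by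
    apply Tendsto.inf
    · have : Continuous (fun x : ℝ => 1 + x) := by continuity
      have := this.tendsto 0
      simpa using this
    · apply tendsto_principal_principal.mpr
      intro x hx
      simp only [Set.mem_compl_iff, Set.mem_singleton_iff] at *
      intro hc
      apply hx
      linarith
  have h1 : Tendsto (fun x : ℝ => if x = 0 then 1 else Real.log (1 + x) / x)
      (nhdsWithin 0 {(0:ℝ)}ᶜ) (nhds 1) := by
    have := hs.comp hmap
    apply this.congr'
    filter_upwards [self_mem_nhdsWithin] with x hx
    simp only [Set.mem_compl_iff, Set.mem_singleton_iff] at hx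
    simp [Function.comp, slope, hx, Real.log_one]
    ring
  have h2 : Tendsto (fun x : ℝ => if x = 0 then 1 else Real.log (1 + x) / x)
      (pure (0:ℝ)) (nhds 1) := by
    have := tendsto_pure_nhds (fun x : ℝ => if x = 0 then 1 else Real.log (1 + x) / x) 0
    simpa using this
  have : nhdsWithin (0:ℝ) {(0:ℝ)}ᶜ ⊔ pure 0 = nhds 0 :=
    nhdsNE_sup_pure 0
  rw [← this]
  exact Tendsto.sup h1 h2

theorem stmt2 (q g : ℝ → ℝ) (ρ : ℝ) (hρ : ρ ≤ 0)
    (hmono : Monotone q)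
    (hqpos : ∀ᶠ y in atTop, 0 < q y)
    (hgpos : ∀ y, 0 < g y)
    (hgq : Tendsto (fun y => g y / q y) atTop (nhds 0))
    (hERV : ∀ l : ℝ, 0 < l →
      Tendsto (fun y => (q (y * l) - q y) / g y) atTop (nhds (h ρ l))) :
    ∀ l : ℝ, 0 < l →
      Tendsto (fun y => (Real.log (q (y * l)) - Real.log (q y)) / (g y / q y))
        atTop (nhds (h ρ l)) := by
  intro l hl
  set L : ℝ → ℝ := fun x => if x = 0 then 1 else Real.log (1 + x) / x with hL
  set t : ℝ → ℝ := fun y => (q (y * l) - q y) / q y with ht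
  set u : ℝ → ℝ := fun y => (q (y * l) - q y) / g y with hu
  -- t = u * (g/q)
  have htuq : ∀ y, t y = u y * (g y / q y) := by
    intro y
    have hg := (hgpos y).ne'
    field_simp [ht, hu]
    show (q (y * l) - q y) / q y = (q (y * l) - q y) / g y * g y / q y
    rw [div_mul_cancel₀ _ hg]
  have htend_t : Tendsto t atTop (nhds 0) := by
    have := (hERV l hl).mul hgq
    rw [mul_zero] at this
    exact this.congr fun y => (htuq y).symm
  have htend : Tendsto (fun y => u y * L (t y)) atTop (nhds (h ρ l)) := by
    have := (hERV l hl).mul (Llim.comp htend_t)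
    rw [mul_one] at this
    exact this
  -- eventual positivity of q at y and y*l
  have hql : ∀ᶠ y in atTop, 0 < q (y * l) := by
    obtain ⟨N, hN⟩ := hqpos.exists_forall_of_atTop
    filter_upwards [eventually_ge_atTop (N / l), eventually_ge_atTop N] with y hy _
    exact hN _ ((div_le_iff₀ hl).mp hy)
  apply htend.congr'
  filter_upwards [hqpos, hql] with y hq hql'
  have hqne : q y ≠ 0 := hq.ne'
  have hgne : g y ≠ 0 := (hgpos y).ne'
  by_cases hΔ : q (y * l) = q y
  · have : t y = 0 := by simp [ht, hΔ]
    simp [hu, hΔ, this, hL]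
  · have htne : t y ≠ 0 := by
      simp only [ht, div_ne_zero_iff]
      exact ⟨sub_ne_zero.mpr hΔ, hqne⟩
    have h1t : 1 + t y = q (y * l) / q y := by
      field_simp [ht]
      show (1 + (q (y * l) - q y) / q y) * q y = q (y * l)
      rw [add_mul, div_mul_cancel₀ _ hqne]
      ring
    have hlog : Real.log (1 + t y) = Real.log (q (y * l)) - Real.log (q y) := by
      rw [h1t, Real.log_div hql'.ne' hqne]
    simp only [hL, htne, if_neg, if_false, hlog]
    have hsub : q (y * l) - q y ≠ 0 := sub_ne_zero.mpr hΔ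
    rw [ht, hu]
    field_simp
end

section
/- Let q : ℝ → ℝ be nondecreasing and positive with ρ < 0, and suppose (log q(yλ) − log q(y))/f(y) → h_ρ(λ) for all λ > 0 for some positive function f. Then f(y) → 0 as y → ∞, and (q(yλ) − q(y))/(f(y) q(y)) → h_ρ(λ) for all λ > 0, i.e., q ∈ ERV with the same negative index ρ and auxiliary function f·q. -/
open Filter Real

theorem stmt3 (q f : ℝ → ℝ) (ρ : ℝ) (hρ : ρ < 0)
    (hmono : Monotone q)
    (hqpos : ∀ᶠ y in atTop, 0 < q y)
    (hfpos : ∀ y, 0 < f y)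
    (hERV : ∀ l : ℝ, 0 < l →
      Tendsto (fun y => (Real.log (q (y * l)) - Real.log (q y)) / f y)
        atTop (nhds (h ρ l))) :
    Tendsto f atTop (nhds 0) ∧
    ∀ l : ℝ, 0 < l →
      Tendsto (fun y => (q (y * l) - q y) / (f y * q y)) atTop (nhds (h ρ l)) := by
  obtain ⟨Y0, hY0⟩ := eventually_atTop.mp hqpos
  have hρ0 : ρ ≠ 0 := hρ.ne
  set L : ℝ → ℝ := fun y => Real.log (q y) with hLdef
  set D : ℝ → ℝ := fun y => L (y * 2) - L y with hDdef
  have h2val : h ρ 2 = ((2:ℝ) ^ ρ - 1) / ρ := by simp [h, hρ0]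
  have h4val : h ρ 4 = ((4:ℝ) ^ ρ - 1) / ρ := by simp [h, hρ0]
  have h2ρlt : (2:ℝ) ^ ρ < 1 := Real.rpow_lt_one_of_one_lt_of_neg one_lt_two hρ
  have h2ρpos : (0:ℝ) < (2:ℝ) ^ ρ := Real.rpow_pos_of_pos two_pos ρ
  have h2pos : 0 < h ρ 2 := by
    rw [h2val]
    apply div_pos_of_neg_of_neg <;> linarith
  set c : ℝ := ((2:ℝ) ^ ρ + 1) / 2 with hcdef
  have hcρ : (2:ℝ) ^ ρ < c := by rw [hcdef]; linarith
  have hc1 : c < 1 := by rw [hcdef]; linarith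
  have hc0 : 0 < c := by rw [hcdef]; linarith
  have T2 : Tendsto (fun y => D y / f y) atTop (nhds (h ρ 2)) := hERV 2 two_pos
  have T4 : Tendsto (fun y => (L (y * 4) - L y) / f y) atTop (nhds (h ρ 4)) :=
    hERV 4 (by norm_num)
  have Tsub : Tendsto (fun y => (L (y * 4) - L (y * 2)) / f y) atTop
      (nhds ((2:ℝ) ^ ρ * h ρ 2)) := by
    have hts := T4.sub T2
    have hval : h ρ 4 - h ρ 2 = (2:ℝ) ^ ρ * h ρ 2 := by
      rw [h2val, h4val]
      have h42 : (4:ℝ) ^ ρ = (2:ℝ) ^ ρ * (2:ℝ) ^ ρ := by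
        rw [← Real.mul_rpow (by norm_num) (by norm_num)]; norm_num
      field_simp [h42]; rw [h42]; ring
    rw [hval] at hts
    refine hts.congr fun y => ?_
    rw [div_sub_div_same]; simp only [hDdef]; ring_nf
  have hevlt : ∀ᶠ y in atTop, (L (y * 4) - L (y * 2)) / f y < c * (D y / f y) :=
    Tsub.eventually_lt (T2.const_mul c) (by nlinarith)
  have hcontr : ∀ᶠ y in atTop, D (y * 2) ≤ c * D y := by
    filter_upwards [hevlt] with y hy
    have hf := hfpos y
    have h1 : (L (y * 4) - L (y * 2)) / f y * f y = L (y * 4) - L (y * 2) :=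
      div_mul_cancel₀ _ hf.ne'
    have h2 : c * (D y / f y) * f y = c * D y := by field_simp
    have hlt := mul_lt_mul_of_pos_right hy hf
    rw [h1, h2] at hlt
    have h3 : D (y * 2) = L (y * 4) - L (y * 2) := by
      have e : y * 2 * 2 = y * 4 := by ring
      simp only [hDdef, e]
    linarith
  have hDnn : ∀ᶠ y in atTop, 0 ≤ D y := by
    filter_upwards [eventually_ge_atTop (max Y0 0)] with y hy
    have hy0 : Y0 ≤ y := le_trans (le_max_left _ _) hy
    have hynn : (0:ℝ) ≤ y := le_trans (le_max_right _ _) hy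
    have hqy := hY0 y hy0
    have hle : q y ≤ q (y * 2) := hmono (by nlinarith)
    exact sub_nonneg.mpr (Real.log_le_log hqy hle)
  obtain ⟨Y, hY⟩ := eventually_atTop.mp
    (((eventually_ge_atTop (1:ℝ)).and (eventually_ge_atTop Y0)).and (hcontr.and hDnn))
  set Y1 : ℝ := max Y 1 with hY1def
  have hY1pos : (0:ℝ) < Y1 := lt_of_lt_of_le one_pos (le_max_right _ _)
  have key : ∀ y, Y1 ≤ y → (1 ≤ y ∧ Y0 ≤ y) ∧ (D (y * 2) ≤ c * D y ∧ 0 ≤ D y) :=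
    fun y hy => hY y (le_trans (le_max_left _ _) hy)
  have hYle : ∀ n : ℕ, Y1 ≤ Y1 * 2 ^ n := by
    intro n
    have h1 : (1:ℝ) ≤ 2 ^ n := one_le_pow₀ (by norm_num)
    nlinarith
  have hDgeo : ∀ n : ℕ, D (Y1 * 2 ^ n) ≤ c ^ n * D Y1 := by
    intro n
    induction n with
    | zero => simp
    | succ n ih =>
      have h1 := (key _ (hYle n)).2.1
      have e : Y1 * 2 ^ (n + 1) = Y1 * 2 ^ n * 2 := by ring
      calc D (Y1 * 2 ^ (n + 1)) = D (Y1 * 2 ^ n * 2) := by rw [e]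
        _ ≤ c * D (Y1 * 2 ^ n) := h1
        _ ≤ c * (c ^ n * D Y1) := mul_le_mul_of_nonneg_left ih hc0.le
        _ = c ^ (n + 1) * D Y1 := by ring
  have hLsum : ∀ n : ℕ, L (Y1 * 2 ^ n) ≤ L Y1 + D Y1 * ∑ k ∈ Finset.range n, c ^ k := by
    intro n
    induction n with
    | zero => simp
    | succ n ih =>
      have e : Y1 * 2 ^ (n + 1) = Y1 * 2 ^ n * 2 := by ring
      have hsplit : L (Y1 * 2 ^ (n + 1)) = L (Y1 * 2 ^ n) + D (Y1 * 2 ^ n) := by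
        simp only [hDdef]; rw [e]; ring
      rw [hsplit, Finset.sum_range_succ]
      have hg := hDgeo n
      have hcomm : D Y1 * c ^ n = c ^ n * D Y1 := mul_comm _ _
      have hdistr : D Y1 * (∑ k ∈ Finset.range n, c ^ k + c ^ n) =
          D Y1 * ∑ k ∈ Finset.range n, c ^ k + D Y1 * c ^ n := by ring
      rw [hdistr]
      linarith
  have hDY1nn : 0 ≤ D Y1 := (key Y1 le_rfl).2.2
  have hsum_le : ∀ n : ℕ, (∑ k ∈ Finset.range n, c ^ k) ≤ 1 / (1 - c) := by
    intro n
    rw [geom_sum_eq hc1.ne]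
    have e : (c ^ n - 1) / (c - 1) = (1 - c ^ n) / (1 - c) := by
      rw [← neg_div_neg_eq]; ring_nf
    rw [e]
    have hcn : (0:ℝ) ≤ c ^ n := pow_nonneg hc0.le n
    have h1c : (0:ℝ) < 1 - c := by linarith
    gcongr
    linarith
  set M : ℝ := L Y1 + D Y1 * (1 / (1 - c)) with hMdef
  have hLM : ∀ n : ℕ, L (Y1 * 2 ^ n) ≤ M := by
    intro n
    refine (hLsum n).trans ?_
    rw [hMdef]
    have := mul_le_mul_of_nonneg_left (hsum_le n) hDY1nn
    linarith
  have hqbound : ∀ y, q y ≤ max (q Y1) (Real.exp M) := by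
    intro y
    rcases le_total y Y1 with hy | hy
    · exact le_max_of_le_left (hmono hy)
    · obtain ⟨n, hn⟩ := exists_nat_gt (y / Y1)
      have hn2 : (n:ℝ) < 2 ^ n := by
        have := Nat.lt_two_pow_self (n := n)
        calc (n:ℝ) < ((2 ^ n : ℕ) : ℝ) := by exact_mod_cast this
          _ = 2 ^ n := by push_cast; ring
      have hyn : y ≤ Y1 * 2 ^ n := by
        have : y / Y1 < 2 ^ n := lt_trans hn hn2
        nlinarith [(div_lt_iff₀ hY1pos).mp this]
      have hq2pos : 0 < q (Y1 * 2 ^ n) :=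
        hY0 _ (le_trans (key Y1 le_rfl).1.2 (hYle n))
      calc q y ≤ q (Y1 * 2 ^ n) := hmono hyn
        _ = Real.exp (L (Y1 * 2 ^ n)) := (Real.exp_log hq2pos).symm
        _ ≤ Real.exp M := Real.exp_le_exp.mpr (hLM n)
        _ ≤ max (q Y1) (Real.exp M) := le_max_right _ _
  have hbdd : BddAbove (Set.range q) :=
    ⟨max (q Y1) (Real.exp M), by rintro _ ⟨y, rfl⟩; exact hqbound y⟩
  have hqQ : Tendsto q atTop (nhds (⨆ y, q y)) := tendsto_atTop_ciSup hmono hbdd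
  have hQpos : 0 < ⨆ y, q y := lt_of_lt_of_le (hY0 Y0 le_rfl) (le_ciSup hbdd Y0)
  have hLt : Tendsto L atTop (nhds (Real.log (⨆ y, q y))) :=
    (Real.continuousAt_log hQpos.ne').tendsto.comp hqQ
  have hmul2 : Tendsto (fun y : ℝ => y * 2) atTop atTop :=
    tendsto_id.atTop_mul_const two_pos
  have hDt : Tendsto D atTop (nhds 0) := by
    have h0 := (hLt.comp hmul2).sub hLt
    rw [sub_self] at h0
    exact h0
  have hf0 : Tendsto f atTop (nhds 0) := by
    have hne : ∀ᶠ y in atTop, D y / f y ≠ 0 := T2.eventually_ne h2pos.ne'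
    have hdiv : Tendsto (fun y => D y / (D y / f y)) atTop (nhds (0 / h ρ 2)) :=
      hDt.div T2 h2pos.ne'
    rw [zero_div] at hdiv
    refine hdiv.congr' ?_
    filter_upwards [hne] with y hy
    have hDy : D y ≠ 0 := fun hD => hy (by rw [hD, zero_div])
    rw [div_div_eq_mul_div, mul_comm, mul_div_assoc, div_self hDy, mul_one]
  refine ⟨hf0, ?_⟩
  intro l hl
  set Δ : ℝ → ℝ := fun y => L (y * l) - L y with hΔdef
  have hΔf : Tendsto (fun y => Δ y / f y) atTop (nhds (h ρ l)) := hERV l hl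
  have hΔ0 : Tendsto Δ atTop (nhds 0) := by
    have hmulf := hΔf.mul hf0
    rw [mul_zero] at hmulf
    refine hmulf.congr fun y => ?_
    exact div_mul_cancel₀ _ (hfpos y).ne'
  set G : ℝ → ℝ := fun t => if t = 0 then 1 else (Real.exp t - 1) / t with hGdef
  have hG : Tendsto G (nhds 0) (nhds 1) := by
    rw [← nhdsNE_sup_pure (0:ℝ)]
    rw [tendsto_sup]
    constructor
    · have hd := Real.hasDerivAt_exp 0
      rw [hasDerivAt_iff_tendsto_slope, Real.exp_zero] at hd
      refine hd.congr' ?_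
      filter_upwards [self_mem_nhdsWithin] with t ht
      simp only [Set.mem_compl_iff, Set.mem_singleton_iff] at ht
      rw [slope_def_field]
      simp [hGdef, ht, Real.exp_zero]
    · have hG0 : G 0 = 1 := by simp [hGdef]
      rw [← hG0]
      exact (tendsto_pure_pure G 0).mono_right (pure_le_nhds _)
  have hGΔ : Tendsto (fun y => G (Δ y)) atTop (nhds 1) := hG.comp hΔ0
  have hprod : Tendsto (fun y => G (Δ y) * (Δ y / f y)) atTop (nhds (h ρ l)) := by
    have hm := hGΔ.mul hΔf
    rwa [one_mul] at hm
  refine hprod.congr' ?_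
  have hml : Tendsto (fun y : ℝ => y * l) atTop atTop := tendsto_id.atTop_mul_const hl
  filter_upwards [eventually_ge_atTop Y0, hml.eventually (eventually_ge_atTop Y0)]
    with y hy hyl
  have hqy := hY0 y hy
  have hqyl := hY0 (y * l) hyl
  have hfy := hfpos y
  have hexp : Real.exp (Δ y) = q (y * l) / q y := by
    show Real.exp (Real.log (q (y * l)) - Real.log (q y)) = _
    rw [Real.exp_sub, Real.exp_log hqyl, Real.exp_log hqy]
  have key2 : G (Δ y) * (Δ y / f y) = (Real.exp (Δ y) - 1) / f y := by
    by_cases hΔy : Δ y = 0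
    · simp [hGdef, hΔy]
    · simp only [hGdef, if_neg hΔy]
      field_simp
  rw [key2, hexp]
  field_simp
end

section
/- Suppose U : ℝ → ℝ is nondecreasing with lim U = ∞, and both U and q := U ∘ exp belong to ERV: there exist reals γ, ρ and positive functions w, g with (U(tλ)−U(t))/w(t) → h_γ(λ) and (q(yλ)−q(y))/g(y) → h_ρ(λ) for all λ > 0. Then γ = 0. -/
set_option maxHeartbeats 1000000


open Filter Real

private lemma ev_le' (a b w : ℝ → ℝ) (hw : ∀ t, 0 < w t) {La Lb : ℝ} (θ : ℝ)
    (ha : Tendsto (fun t => a t / w t) atTop (nhds La))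
    (hb : Tendsto (fun t => b t / w t) atTop (nhds Lb))
    (hlt : La < θ * Lb) : ∀ᶠ t in atTop, a t ≤ θ * b t := by
  have h1 : Tendsto (fun t => θ * (b t / w t) - a t / w t) atTop (nhds (θ * Lb - La)) :=
    (hb.const_mul θ).sub ha
  have h2 : ∀ᶠ t in atTop, 0 < θ * (b t / w t) - a t / w t :=
    h1.eventually (eventually_gt_nhds (by linarith))
  filter_upwards [h2] with t ht
  have hwt := hw t
  have h3 : a t / w t < θ * b t / w t := by rw [mul_div_assoc]; linarith
  have h4 := mul_lt_mul_of_pos_right h3 hwt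
  rw [div_mul_cancel₀ _ (ne_of_gt hwt), div_mul_cancel₀ _ (ne_of_gt hwt)] at h4
  exact h4.le

private lemma ev_ge' (a b w : ℝ → ℝ) (hw : ∀ t, 0 < w t) {La Lb : ℝ} (θ : ℝ)
    (ha : Tendsto (fun t => a t / w t) atTop (nhds La))
    (hb : Tendsto (fun t => b t / w t) atTop (nhds Lb))
    (hlt : θ * Lb < La) : ∀ᶠ t in atTop, θ * b t ≤ a t := by
  have h1 : Tendsto (fun t => a t / w t - θ * (b t / w t)) atTop (nhds (La - θ * Lb)) :=
    ha.sub (hb.const_mul θ)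
  have h2 : ∀ᶠ t in atTop, 0 < a t / w t - θ * (b t / w t) :=
    h1.eventually (eventually_gt_nhds (by linarith))
  filter_upwards [h2] with t ht
  have hwt := hw t
  have h3 : θ * b t / w t < a t / w t := by rw [mul_div_assoc]; linarith
  have h4 := mul_lt_mul_of_pos_right h3 hwt
  rw [div_mul_cancel₀ _ (ne_of_gt hwt), div_mul_cancel₀ _ (ne_of_gt hwt)] at h4
  exact h4.le

private lemma ev_pos' (b w : ℝ → ℝ) (hw : ∀ t, 0 < w t) {Lb : ℝ}
    (hb : Tendsto (fun t => b t / w t) atTop (nhds Lb)) (hL : 0 < Lb) :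
    ∀ᶠ t in atTop, 0 < b t := by
  have h2 : ∀ᶠ t in atTop, 0 < b t / w t := hb.eventually (eventually_gt_nhds hL)
  filter_upwards [h2] with t ht
  have hwt := hw t
  have h4 := mul_pos ht hwt
  rw [div_mul_cancel₀ _ (ne_of_gt hwt)] at h4
  exact h4

private lemma h_two_pos (γ : ℝ) : 0 < h γ 2 := by
  unfold h
  split_ifs with h0
  · exact Real.log_pos one_lt_two
  · rcases lt_or_gt_of_ne h0 with hneg | hpos
    · have h1 : (2:ℝ) ^ γ < 1 := Real.rpow_lt_one_of_one_lt_of_neg one_lt_two hneg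
      exact div_pos_iff.mpr (Or.inr ⟨by linarith, hneg⟩)
    · have h1 : 1 < (2:ℝ) ^ γ :=
        (Real.one_lt_rpow_iff_of_pos two_pos).mpr (Or.inl ⟨one_lt_two, hpos⟩)
      exact div_pos (by linarith) hpos

private lemma h_four (γ : ℝ) : h γ 4 - h γ 2 = 2 ^ γ * h γ 2 := by
  unfold h
  split_ifs with h0
  · subst h0
    rw [Real.rpow_zero, show (4:ℝ) = 2 * 2 by norm_num,
      Real.log_mul two_ne_zero two_ne_zero]
    ring
  · have h4 : (4:ℝ) ^ γ = 2 ^ γ * 2 ^ γ := by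
      rw [show (4:ℝ) = 2 * 2 by norm_num, Real.mul_rpow (by norm_num) (by norm_num)]
    rw [h4]
    field_simp
    ring

theorem stmt4 (U w g : ℝ → ℝ) (γ ρ : ℝ)
    (hmono : Monotone U)
    (hinf : Tendsto U atTop atTop)
    (hwpos : ∀ t, 0 < w t) (hgpos : ∀ y, 0 < g y)
    (hUERV : ∀ l : ℝ, 0 < l →
      Tendsto (fun t => (U (t * l) - U t) / w t) atTop (nhds (h γ l)))
    (hqERV : ∀ l : ℝ, 0 < l →
      Tendsto (fun y => (U (Real.exp (y * l)) - U (Real.exp y)) / g y)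
        atTop (nhds (h ρ l))) :
    γ = 0 := by
  have h2pos := h_two_pos γ
  have L2 := hUERV 2 two_pos
  have L4 := hUERV 4 (by norm_num)
  have L42 : Tendsto (fun t => (U (t * 4) - U (t * 2)) / w t) atTop
      (nhds (h γ 4 - h γ 2)) := Tendsto.congr (fun t => by ring) (L4.sub L2)
  rcases lt_trichotomy γ 0 with hneg | hz | hpos
  · -- case γ < 0 : U is bounded, contradiction with hinf
    exfalso
    set θ := ((2:ℝ) ^ γ + 1) / 2 with hθdef
    have hp : (0:ℝ) < 2 ^ γ := Real.rpow_pos_of_pos two_pos γ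
    have hlt1 : (2:ℝ) ^ γ < 1 := Real.rpow_lt_one_of_one_lt_of_neg one_lt_two hneg
    have hθpos : 0 < θ := by rw [hθdef]; linarith
    have hθlt1 : θ < 1 := by rw [hθdef]; linarith
    have hθgt : (2:ℝ) ^ γ < θ := by rw [hθdef]; linarith
    have hev := ev_le' _ _ w hwpos θ L42 L2
      (by rw [h_four]; exact mul_lt_mul_of_pos_right hθgt h2pos)
    obtain ⟨T, hT⟩ := eventually_atTop.mp hev
    set t := max T 1 with htdef
    have htT : T ≤ t := le_max_left _ _
    have ht1 : (1:ℝ) ≤ t := le_max_right _ _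
    have ht0 : (0:ℝ) < t := by linarith
    set Δ := U (t * 2) - U t with hΔ
    have hΔ0 : 0 ≤ Δ := sub_nonneg.mpr (hmono (by nlinarith))
    set c := Δ / (1 - θ) with hc
    have hc0 : 0 ≤ c := div_nonneg hΔ0 (by linarith)
    have hcΔ : c * (1 - θ) = Δ := by
      rw [hc]
      exact div_mul_cancel₀ Δ (by linarith : (1:ℝ) - θ ≠ 0)
    have inc : ∀ k : ℕ, U (t * 2 ^ (k + 1)) - U (t * 2 ^ k) ≤ θ ^ k * Δ := by
      intro k
      induction k with
      | zero => simp [hΔ]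
      | succ k ih =>
        have hpk : (1:ℝ) ≤ 2 ^ k := one_le_pow₀ (by norm_num)
        have hs : T ≤ t * 2 ^ k := by nlinarith
        have h' := hT (t * 2 ^ k) hs
        rw [show t * 2 ^ k * 4 = t * 2 ^ (k + 2) from by ring,
          show t * 2 ^ k * 2 = t * 2 ^ (k + 1) from by ring] at h'
        calc U (t * 2 ^ (k + 1 + 1)) - U (t * 2 ^ (k + 1))
            ≤ θ * (U (t * 2 ^ (k + 1)) - U (t * 2 ^ k)) := h'
          _ ≤ θ * (θ ^ k * Δ) := by nlinarith
          _ = θ ^ (k + 1) * Δ := by ring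
    have bound : ∀ m : ℕ, U (t * 2 ^ m) ≤ U t + c * (1 - θ ^ m) := by
      intro m
      induction m with
      | zero => simp
      | succ m ih =>
        have h1 := inc m
        calc U (t * 2 ^ (m + 1))
            ≤ U t + c * (1 - θ ^ m) + θ ^ m * (c * (1 - θ)) := by rw [hcΔ]; linarith
          _ = U t + c * (1 - θ ^ (m + 1)) := by ring
    have bound' : ∀ m : ℕ, U (t * 2 ^ m) ≤ U t + c := by
      intro m
      have h1 := bound m
      have h2 : (0:ℝ) ≤ θ ^ m := pow_nonneg hθpos.le m
      nlinarith
    obtain ⟨B, hB⟩ := eventually_atTop.mp (hinf.eventually_ge_atTop (U t + c + 1))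
    obtain ⟨m, hm⟩ := pow_unbounded_of_one_lt B (one_lt_two (α := ℝ))
    have hle : B ≤ t * 2 ^ m := by nlinarith [pow_pos (two_pos (α := ℝ)) m]
    have hB' := hB _ hle
    have hb' := bound' m
    linarith
  · exact hz
  · -- case γ > 0 : contradiction with q-side ERV
    exfalso
    have hρ2 := h_two_pos ρ
    have hq2 := hqERV 2 two_pos
    have hq4 := hqERV 4 (by norm_num)
    have Q42 : Tendsto (fun y => (U (Real.exp (y * 4)) - U (Real.exp (y * 2))) / g y) atTop
        (nhds (h ρ 4 - h ρ 2)) := Tendsto.congr (fun y => by ring) (hq4.sub hq2)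
    set M := (2:ℝ) ^ ρ + 1 with hMdef
    have hρp : (0:ℝ) < 2 ^ ρ := Real.rpow_pos_of_pos two_pos ρ
    have hM1 : 1 < M := by rw [hMdef]; linarith
    have hM0 : (0:ℝ) < M := by linarith
    have hevq := ev_le' _ _ g hgpos M Q42 hq2
      (by rw [h_four, hMdef]; nlinarith)
    obtain ⟨S, hS⟩ := eventually_atTop.mp hevq
    set θ := ((2:ℝ) ^ γ + 1) / 2 with hθdef
    have hg1 : 1 < (2:ℝ) ^ γ :=
      (Real.one_lt_rpow_iff_of_pos two_pos).mpr (Or.inl ⟨one_lt_two, hpos⟩)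
    have hθ1 : 1 < θ := by rw [hθdef]; linarith
    have hθlt : θ < 2 ^ γ := by rw [hθdef]; linarith
    have hθ0 : (0:ℝ) < θ := by linarith
    have hevU := ev_ge' _ _ w hwpos θ L42 L2
      (by rw [h_four]; exact mul_lt_mul_of_pos_right hθlt h2pos)
    obtain ⟨T₁, hT₁⟩ := eventually_atTop.mp hevU
    have hevP := ev_pos' _ w hwpos L2 h2pos
    obtain ⟨T₂, hT₂⟩ := eventually_atTop.mp hevP
    set y := max S (max 1 (max T₁ T₂)) with hydef
    have hyS : S ≤ y := le_max_left _ _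
    have hy1 : (1:ℝ) ≤ y := le_trans (le_max_left _ _) (le_max_right _ _)
    have hyT₁ : T₁ ≤ y :=
      le_trans (le_trans (le_max_left _ _) (le_max_right _ _)) (le_max_right _ _)
    have hyT₂ : T₂ ≤ y :=
      le_trans (le_trans (le_max_right _ _) (le_max_right _ _)) (le_max_right _ _)
    set t := Real.exp y with htdef
    have hty : y ≤ t := by
      have := Real.add_one_le_exp y
      rw [htdef]; linarith
    have ht1 : (1:ℝ) ≤ t := le_trans hy1 hty
    have ht0 : (0:ℝ) < t := by linarith
    set Δ := U (t * 2) - U t with hΔ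
    have hΔpos : 0 < Δ := hT₂ t (le_trans hyT₂ hty)
    set Δ₂ := U (Real.exp (y * 2)) - U (Real.exp y) with hΔ₂
    have hΔ₂0 : 0 ≤ Δ₂ :=
      sub_nonneg.mpr (hmono (Real.exp_le_exp.mpr (by nlinarith)))
    have incL : ∀ k : ℕ, θ ^ k * Δ ≤ U (t * 2 ^ (k + 1)) - U (t * 2 ^ k) := by
      intro k
      induction k with
      | zero => simp [hΔ]
      | succ k ih =>
        have hpk : (1:ℝ) ≤ 2 ^ k := one_le_pow₀ (by norm_num)
        have hs : T₁ ≤ t * 2 ^ k := by nlinarith [le_trans hyT₁ hty]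
        have h' := hT₁ (t * 2 ^ k) hs
        rw [show t * 2 ^ k * 4 = t * 2 ^ (k + 2) from by ring,
          show t * 2 ^ k * 2 = t * 2 ^ (k + 1) from by ring] at h'
        calc θ ^ (k + 1) * Δ = θ * (θ ^ k * Δ) := by ring
          _ ≤ θ * (U (t * 2 ^ (k + 1)) - U (t * 2 ^ k)) := by nlinarith
          _ ≤ U (t * 2 ^ (k + 2)) - U (t * 2 ^ (k + 1)) := h'
    have lowB : ∀ m : ℕ, θ ^ m * Δ ≤ U (t * 2 ^ (m + 1)) - U t := by
      intro m
      have h1 := incL m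
      have hpk : (1:ℝ) ≤ 2 ^ m := one_le_pow₀ (by norm_num)
      have h2 : U t ≤ U (t * 2 ^ m) := hmono (by nlinarith)
      linarith
    have incU : ∀ k : ℕ,
        U (Real.exp (y * 2 ^ (k + 1))) - U (Real.exp (y * 2 ^ k)) ≤ M ^ k * Δ₂ := by
      intro k
      induction k with
      | zero => simp [hΔ₂]
      | succ k ih =>
        have hpk : (1:ℝ) ≤ 2 ^ k := one_le_pow₀ (by norm_num)
        have hs : S ≤ y * 2 ^ k := by nlinarith
        have h' := hS (y * 2 ^ k) hs
        rw [show y * 2 ^ k * 4 = y * 2 ^ (k + 2) from by ring,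
          show y * 2 ^ k * 2 = y * 2 ^ (k + 1) from by ring] at h'
        calc U (Real.exp (y * 2 ^ (k + 2))) - U (Real.exp (y * 2 ^ (k + 1)))
            ≤ M * (U (Real.exp (y * 2 ^ (k + 1))) - U (Real.exp (y * 2 ^ k))) := h'
          _ ≤ M * (M ^ k * Δ₂) := by nlinarith
          _ = M ^ (k + 1) * Δ₂ := by ring
    have sumU : ∀ n : ℕ,
        U (Real.exp (y * 2 ^ n)) - U (Real.exp y) ≤ (n : ℝ) * M ^ n * Δ₂ := by
      intro n
      induction n with
      | zero => simp
      | succ n ih =>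
        have h1 := incU n
        have hMn : M ^ n ≤ M ^ (n + 1) := by
          have : (0:ℝ) < M ^ n := pow_pos hM0 n
          calc M ^ n = M ^ n * 1 := by ring
            _ ≤ M ^ n * M := by nlinarith
            _ = M ^ (n + 1) := by ring
        have hMn0 : (0:ℝ) < M ^ n := pow_pos hM0 n
        push_cast
        nlinarith [ih, h1, mul_le_mul_of_nonneg_right
          (mul_le_mul_of_nonneg_left hMn (by positivity : (0:ℝ) ≤ (n:ℝ) + 1)) hΔ₂0]
    have hlog2 : Real.log 2 ≤ 1 := by
      have := Real.log_two_lt_d9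
      linarith
    have hlog2' : (0:ℝ) ≤ Real.log 2 := Real.log_nonneg one_le_two
    have link : ∀ n m : ℕ, (m : ℝ) + 2 ≤ 2 ^ n →
        θ ^ m * Δ ≤ (n : ℝ) * M ^ n * Δ₂ := by
      intro n m hnm
      have h1 := lowB m
      have epow : (2:ℝ) ^ (m + 1) = Real.exp (((m + 1 : ℕ) : ℝ) * Real.log 2) := by
        rw [Real.exp_nat_mul, Real.exp_log two_pos]
      have h2 : t * 2 ^ (m + 1) ≤ Real.exp (y * 2 ^ n) := by
        rw [htdef, epow, ← Real.exp_add]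
        apply Real.exp_le_exp.mpr
        push_cast
        nlinarith [mul_nonneg (sub_nonneg.mpr hy1) (by nlinarith : (0:ℝ) ≤ (2:ℝ) ^ n - 1),
          mul_nonneg (by positivity : (0:ℝ) ≤ (m:ℝ) + 1) (sub_nonneg.mpr hlog2)]
      have h3 : U (t * 2 ^ (m + 1)) ≤ U (Real.exp (y * 2 ^ n)) := hmono h2
      have h4 := sumU n
      have h5 : U (Real.exp y) = U t := by rw [htdef]
      linarith
    obtain ⟨c, hc⟩ := pow_unbounded_of_one_lt (2 * M) hθ1
    have key : ∀ m' : ℕ, 2 * c + 2 ≤ m' → ((m' : ℝ) + 1) * Δ ≤ 2 * Δ₂ := by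
      intro m' hm'
      set n := 2 * m' with hn
      have hm1 : 1 ≤ m' := by omega
      have hnat : c * n + 2 ≤ 2 ^ n := by
        have h1 : m' + 1 ≤ 2 ^ m' := Nat.lt_two_pow_self (n := m')
        have h2n : 2 ^ n = 2 ^ m' * 2 ^ m' := by
          rw [hn, two_mul, pow_add]
        rw [h2n, hn]
        nlinarith [h1, hm', hm1]
      have hmlink : ((c * n : ℕ) : ℝ) + 2 ≤ 2 ^ n := by
        have := hnat
        push_cast
        calc ((c : ℝ) * n + 2) = (((c * n + 2 : ℕ) : ℝ)) := by push_cast; ring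
          _ ≤ ((2 ^ n : ℕ) : ℝ) := by exact_mod_cast this
          _ = 2 ^ n := by push_cast; ring
      have h6 := link n (c * n) hmlink
      have h7 : (2 * M) ^ n ≤ θ ^ (c * n) := by
        rw [show θ ^ (c * n) = (θ ^ c) ^ n from pow_mul θ c n]
        exact pow_le_pow_left₀ (by linarith) hc.le n
      have h8 : (2:ℝ) ^ n * M ^ n * Δ ≤ (n : ℝ) * M ^ n * Δ₂ := by
        have h7' := mul_le_mul_of_nonneg_right h7 hΔpos.le
        rw [mul_pow] at h7'
        linarith
      have hMn : (0:ℝ) < M ^ n := pow_pos hM0 n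
      have h9 : (2:ℝ) ^ n * Δ ≤ (n : ℝ) * Δ₂ := by
        nlinarith
      have h1 : m' + 1 ≤ 2 ^ m' := Nat.lt_two_pow_self (n := m')
      have h1' : ((m' : ℝ) + 1) ≤ 2 ^ m' := by exact_mod_cast h1
      have h10 : ((m' : ℝ) + 1) * ((m' : ℝ) + 1) ≤ (2:ℝ) ^ n := by
        rw [hn, two_mul, pow_add]
        nlinarith [h1']
      have hcast : ((n : ℕ) : ℝ) = 2 * (m' : ℝ) := by rw [hn]; push_cast; ring
      rw [hcast] at h9
      nlinarith [hΔpos, hΔ₂0, mul_le_mul_of_nonneg_right h10 hΔpos.le,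
        (by positivity : (0:ℝ) ≤ (m' : ℝ) + 1)]
    obtain ⟨m₀, hm₀⟩ := exists_nat_gt (2 * Δ₂ / Δ)
    set m' := max m₀ (2 * c + 2) with hm'def
    have hk := key m' (le_max_right _ _)
    have h2' : 2 * Δ₂ / Δ < (m' : ℝ) :=
      lt_of_lt_of_le hm₀ (by exact_mod_cast (le_max_left m₀ (2 * c + 2)))
    have h3' : 2 * Δ₂ < (m' : ℝ) * Δ := by
      rw [div_lt_iff₀ hΔpos] at h2'
      linarith
    nlinarith
end

section
/- Let F be a distribution function with right-continuous inverse U of 1/(1−F), set q := U ∘ exp, and suppose there exist ρ ∈ ℝ and a positive function g such that (q(yλ) − q(y))/g(y) → h_ρ(λ) for all λ > 0. Then for all x in the range h_ρ((0,∞)), one has −y^{-1} log(1 − F(x·g(y) + q(y))) → h_ρ^{-1}(x) as y → ∞, i.e., |1 − F(x g(y) + q(y))|^{1/y} → exp(−h_ρ^{-1}(x)). -/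
open Filter Real

lemma h_one (ρ : ℝ) : h ρ 1 = 0 := by
  unfold h; split_ifs with hρ
  · exact Real.log_one
  · rw [Real.one_rpow]; simp

lemma h_lt (ρ : ℝ) {a b : ℝ} (ha : 0 < a) (hab : a < b) : h ρ a < h ρ b := by
  unfold h; split_ifs with hρ
  · exact Real.log_lt_log ha hab
  · rcases lt_or_gt_of_ne hρ with hneg | hpos
    · rw [div_lt_div_right_of_neg hneg]
      have := Real.rpow_lt_rpow_of_neg ha hab hneg
      linarith
    · have := Real.rpow_lt_rpow ha.le hab hpos
      exact div_lt_div_of_pos_right (by linarith) hpos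

theorem stmt5 (F U g : ℝ → ℝ) (ρ : ℝ)
    (hFmono : Monotone F) (hF0 : ∀ x, 0 ≤ F x) (hF1 : ∀ x, F x ≤ 1)
    (hU : ∀ t, U t = sInf {x : ℝ | t ≤ 1 / (1 - F x)})
    (hgpos : ∀ y, 0 < g y)
    (hGW : ∀ l : ℝ, 0 < l →
      Tendsto (fun y => (U (Real.exp (y * l)) - U (Real.exp y)) / g y)
        atTop (nhds (h ρ l))) :
    ∀ l : ℝ, 0 < l →
      Tendsto
        (fun y => -(Real.log (1 - F (h ρ l * g y + U (Real.exp y)))) / y)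
        atTop (nhds l) := by
  intro l hl
  set S : ℝ → Set ℝ := fun t => {x : ℝ | t ≤ 1 / (1 - F x)} with hS
  -- membership characterization
  have hmem : ∀ t x : ℝ, 0 < t → (x ∈ S t ↔ F x < 1 ∧ 1 - 1/t ≤ F x) := by
    intro t x ht
    rcases eq_or_lt_of_le (hF1 x) with h1 | h1
    · simp only [hS, Set.mem_setOf_eq, ← h1, sub_self, div_zero]
      constructor
      · intro hc; linarith
      · rintro ⟨hc, -⟩; linarith
    · have hpos : 0 < 1 - F x := by linarith
      simp only [hS, Set.mem_setOf_eq]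
      rw [le_div_iff₀ hpos]
      constructor
      · intro hle
        refine ⟨h1, ?_⟩
        have h3 : 1 - F x ≤ 1 / t := by
          rw [le_div_iff₀ ht]; linarith [mul_comm t (1 - F x)]
        linarith
      · rintro ⟨-, hle⟩
        have h3 : (1 - F x) * t ≤ 1 := (le_div_iff₀ ht).mp (by linarith)
        linarith [mul_comm t (1 - F x)]
  have hanti : ∀ {t t' : ℝ}, t ≤ t' → S t' ⊆ S t := by
    intro t t' htt x hx
    exact le_trans htt hx
  -- all sets are nonempty
  have hne : ∀ t : ℝ, (S t).Nonempty := by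
    by_contra hc
    push_neg at hc
    obtain ⟨t₁, hempty⟩ := hc
    have hU0 : ∀ t, t₁ ≤ t → U t = 0 := by
      intro t ht
      have hSe : S t = ∅ := Set.eq_empty_of_subset_empty (hempty ▸ hanti ht)
      have hUS : U t = sInf (S t) := hU t
      rw [hUS, hSe, Real.sInf_empty]
    have heq : (fun y => (U (Real.exp (y * 2)) - U (Real.exp y)) / g y)
        =ᶠ[atTop] (fun _ => (0:ℝ)) := by
      filter_upwards [eventually_ge_atTop (max t₁ 0)] with y hy
      have hy0 : 0 ≤ y := le_trans (le_max_right _ _) hy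
      have hyt : t₁ ≤ y := le_trans (le_max_left _ _) hy
      have h1 : t₁ ≤ Real.exp y := le_trans (by linarith [Real.add_one_le_exp y]) le_rfl
      have h2 : t₁ ≤ Real.exp (y * 2) := by
        have := Real.add_one_le_exp (y * 2); nlinarith
      rw [hU0 _ h1, hU0 _ h2]; simp
    have h0 : h ρ 2 = 0 :=
      tendsto_nhds_unique ((hGW 2 two_pos).congr' heq) tendsto_const_nhds
    have := h_lt ρ one_pos one_lt_two
    rw [h_one, h0] at this
    exact lt_irrefl 0 this
  -- eventually bounded below
  have hbdd : ∃ t₀ : ℝ, 1 ≤ t₀ ∧ ∀ t, t₀ ≤ t → BddBelow (S t) := by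
    by_contra hc
    push_neg at hc
    have hFall : ∀ z, F z = 1 := by
      intro z
      by_contra hz
      have hz1 : F z < 1 := lt_of_le_of_ne (hF1 z) hz
      have hzp : 0 < 1 - F z := by linarith
      obtain ⟨t, ht, hnb⟩ := hc (max 1 (1 / (1 - F z) + 1)) (le_max_left _ _)
      have ht1 : (1:ℝ) ≤ t := le_trans (le_max_left _ _) ht
      have ht2 : 1 / (1 - F z) + 1 ≤ t := le_trans (le_max_right _ _) ht
      have htpos : 0 < t := by linarith
      obtain ⟨s, hsS, hsz⟩ := not_bddBelow_iff.mp hnb z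
      have := (hmem t s htpos).mp hsS
      have hFs : F s ≤ F z := hFmono hsz.le
      have h1t : 1 / t < 1 - F z := by
        rw [div_lt_iff₀ htpos]
        nlinarith [mul_le_mul_of_nonneg_left ht2 hzp.le,
          one_div_mul_cancel hzp.ne']
      linarith [this.2]
    obtain ⟨t, ht, hnb⟩ := hc 1 le_rfl
    obtain ⟨s, hsS, -⟩ := not_bddBelow_iff.mp hnb 0
    have := ((hmem t s (by linarith)).mp hsS).1
    rw [hFall s] at this
    exact lt_irrefl 1 this
  obtain ⟨t₀, ht₀1, ht₀⟩ := hbdd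
  -- key inverse relations
  have key_lo : ∀ t w : ℝ, 0 < t → U t < w → 1 - 1/t ≤ F w := by
    intro t w ht hlt
    rw [hU t] at hlt
    replace hlt : sInf (S t) < w := hlt
    obtain ⟨s, hsS, hsw⟩ : ∃ s ∈ S t, s < w := by
      by_cases hb : BddBelow (S t)
      · exact (csInf_lt_iff hb (hne t)).mp hlt
      · obtain ⟨s, hsS, hsw⟩ := not_bddBelow_iff.mp hb w
        exact ⟨s, hsS, hsw⟩
    have := (hmem t s ht).mp hsS
    exact le_trans this.2 (hFmono hsw.le)
  have key_hi : ∀ t w : ℝ, 0 < t → t₀ ≤ t → w < U t → F w ≤ 1 - 1/t := by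
    intro t w ht htt hlt
    rw [hU t] at hlt
    replace hlt : w < sInf (S t) := hlt
    have hb := ht₀ t htt
    obtain ⟨s, hsS⟩ := hne t
    have hws : w < s := lt_of_lt_of_le hlt (csInf_le hb hsS)
    have hFw1 : F w < 1 := lt_of_le_of_lt (hFmono hws.le) ((hmem t s ht).mp hsS).1
    by_contra hcon
    push_neg at hcon
    have hwS : w ∈ S t := (hmem t w ht).mpr ⟨hFw1, hcon.le⟩
    exact absurd (csInf_le hb hwS) (not_le.mpr hlt)
  -- eventual sandwich
  have hsand : ∀ l₁ l₂ : ℝ, 0 < l₁ → l₁ < l → l < l₂ →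
      ∀ᶠ y in atTop,
        Real.exp (-(y * l₂)) ≤ 1 - F (h ρ l * g y + U (Real.exp y)) ∧
        1 - F (h ρ l * g y + U (Real.exp y)) ≤ Real.exp (-(y * l₁)) := by
    intro l₁ l₂ hl₁ hl₁l hll₂
    have hl₂ : 0 < l₂ := lt_trans hl hll₂
    have ev1 := (hGW l₁ hl₁).eventually_lt_const (h_lt ρ hl₁ hl₁l)
    have ev2 := (hGW l₂ hl₂).eventually_const_lt (h_lt ρ hl hll₂)
    filter_upwards [ev1, ev2, eventually_ge_atTop (t₀ / l₂), eventually_ge_atTop 0]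
      with y h1 h2 hy2 hy0
    set w := h ρ l * g y + U (Real.exp y) with hw
    have hg := hgpos y
    have hlo : U (Real.exp (y * l₁)) < w := by
      rw [div_lt_iff₀ hg] at h1; rw [hw]; linarith
    have hhi : w < U (Real.exp (y * l₂)) := by
      rw [lt_div_iff₀ hg] at h2; rw [hw]; linarith
    have ht₀le : t₀ ≤ Real.exp (y * l₂) := by
      have hyl : t₀ ≤ y * l₂ := by rwa [div_le_iff₀ hl₂] at hy2
      linarith [Real.add_one_le_exp (y * l₂)]
    have hFhi := key_hi _ _ (Real.exp_pos _) ht₀le hhi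
    have hFlo := key_lo _ _ (Real.exp_pos _) hlo
    rw [one_div, ← Real.exp_neg] at hFhi hFlo
    constructor
    · linarith
    · linarith
  -- squeeze via tendsto_order
  rw [tendsto_order]
  constructor
  · intro a ha
    set l₁ := (max a 0 + l) / 2 with hl₁def
    have hmax : max a 0 < l := max_lt ha hl
    have hl₁pos : 0 < l₁ := by
      have := le_max_right a 0
      simp only [hl₁def]; linarith
    have hl₁l : l₁ < l := by simp only [hl₁def]; linarith
    have hal₁ : a < l₁ := by
      have := le_max_left a 0
      simp only [hl₁def]; linarith
    filter_upwards [hsand l₁ (l + 1) hl₁pos hl₁l (by linarith), eventually_gt_atTop 0]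
      with y ⟨h2, h1⟩ hy
    have hpos : 0 < 1 - F (h ρ l * g y + U (Real.exp y)) :=
      lt_of_lt_of_le (Real.exp_pos _) h2
    have hlog : Real.log (1 - F (h ρ l * g y + U (Real.exp y))) ≤ -(y * l₁) := by
      calc Real.log (1 - F (h ρ l * g y + U (Real.exp y)))
          ≤ Real.log (Real.exp (-(y * l₁))) :=
            (Real.log_le_log_iff hpos (Real.exp_pos _)).mpr h1
        _ = -(y * l₁) := Real.log_exp _
    have : l₁ ≤ -Real.log (1 - F (h ρ l * g y + U (Real.exp y))) / y := by
      rw [le_div_iff₀ hy]; linarith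
    linarith
  · intro b hb
    set l₂ := (l + b) / 2 with hl₂def
    have hl₂ : l < l₂ := by simp only [hl₂def]; linarith
    have hl₂b : l₂ < b := by simp only [hl₂def]; linarith
    filter_upwards [hsand (l/2) l₂ (by linarith) (by linarith) hl₂, eventually_gt_atTop 0]
      with y ⟨h2, h1⟩ hy
    have hlog : -(y * l₂) ≤ Real.log (1 - F (h ρ l * g y + U (Real.exp y))) := by
      calc -(y * l₂) = Real.log (Real.exp (-(y * l₂))) := (Real.log_exp _).symm
        _ ≤ Real.log (1 - F (h ρ l * g y + U (Real.exp y))) :=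
            (Real.log_le_log_iff (Real.exp_pos _)
              (lt_of_lt_of_le (Real.exp_pos _) h2)).mpr h2
    have : -Real.log (1 - F (h ρ l * g y + U (Real.exp y))) / y ≤ l₂ := by
      rw [div_le_iff₀ hy]; linarith
    linarith
end

section
/- Let F be a distribution function, U the left-continuous inverse of 1/(1−F), q := U ∘ exp, and suppose q is regularly varying with index ρ > 0. Then for all x > 0, |1 − F(x·q(y))|^{1/y} → exp(−x^{1/ρ}) as y → ∞ (the Weibull tail limit). -/
open Filter Real

theorem stmt6 (F U : ℝ → ℝ) (ρ : ℝ) (hρ : 0 < ρ)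
    (hFmono : Monotone F) (hF0 : ∀ x, 0 ≤ F x) (hF1 : ∀ x, F x ≤ 1)
    (hU : ∀ t, U t = sInf {x : ℝ | t ≤ 1 / (1 - F x)})
    (hRV : ∀ l : ℝ, 0 < l →
      Tendsto (fun y => U (Real.exp (y * l)) / U (Real.exp y)) atTop
        (nhds (l ^ ρ))) :
    ∀ x : ℝ, 0 < x →
      Tendsto (fun y => -(Real.log (1 - F (x * U (Real.exp y)))) / y)
        atTop (nhds (x ^ (1 / ρ))) := by
  by_cases htail : ∀ c < (1:ℝ), ∃ z, c ≤ F z ∧ F z < 1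
  · -- main case: tail condition holds
    obtain ⟨x₀, -, hx₀⟩ := htail (1/2) (by norm_num)
    have hFx₀ : 0 < 1 - F x₀ := by linarith
    have hBpos : 0 < 1 / (1 - F x₀) := by positivity
    obtain ⟨T, hTdef⟩ : ∃ T : ℝ, T = 1 / (1 - F x₀) + 2 := ⟨_, rfl⟩
    have hTpos : 0 < T := by rw [hTdef]; linarith
    have hT1 : 1 < T := by rw [hTdef]; linarith
    -- membership characterization
    have memS : ∀ t : ℝ, 1 < t → ∀ z, (t ≤ 1 / (1 - F z) ↔ (1 - 1/t ≤ F z ∧ F z < 1)) := by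
      intro t ht z
      have ht0 : 0 < t := by linarith
      have htt : t * (1/t) = 1 := mul_one_div_cancel (ne_of_gt ht0)
      constructor
      · intro h
        have hz1 : F z < 1 := by
          rcases lt_or_eq_of_le (hF1 z) with h' | h'
          · exact h'
          · rw [h'] at h; norm_num at h; linarith
        have hpos : 0 < 1 - F z := by linarith
        rw [le_div_iff₀ hpos] at h
        exact ⟨by nlinarith, hz1⟩
      · rintro ⟨h1, h2⟩
        have hpos : 0 < 1 - F z := by linarith
        rw [le_div_iff₀ hpos]
        nlinarith
    -- nonemptiness
    have neS : ∀ t : ℝ, 1 < t → ∃ z, t ≤ 1 / (1 - F z) := by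
      intro t ht
      have h1t : 0 < 1/t := by positivity
      obtain ⟨z, hz1, hz2⟩ := htail (1 - 1/t) (by linarith)
      exact ⟨z, (memS t ht z).2 ⟨hz1, hz2⟩⟩
    -- bounded below
    have bddS : ∀ t : ℝ, T < t → BddBelow {z : ℝ | t ≤ 1 / (1 - F z)} := by
      intro t ht
      refine ⟨x₀, fun z hz => ?_⟩
      have ht1 : 1 < t := lt_trans hT1 ht
      have h := ((memS t ht1 z).1 hz).1
      by_contra hlt
      push_neg at hlt
      have hFz : F z ≤ F x₀ := hFmono hlt.le
      have h3 : 1 / (1 - F x₀) < t := by rw [hTdef] at ht; linarith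
      have h2 : 1 / t < 1 - F x₀ := by
        calc 1/t < 1/(1/(1 - F x₀)) := one_div_lt_one_div_of_lt hBpos h3
        _ = 1 - F x₀ := one_div_one_div _
      linarith
    -- monotonicity of U above T
    have Umono : ∀ t t' : ℝ, T < t → t ≤ t' → U t ≤ U t' := by
      intro t t' ht htt
      rw [hU, hU]
      exact csInf_le_csInf (bddS t ht) (neS t' (by linarith [lt_trans hT1 ht]))
        (fun z hz => le_trans htt hz)
    -- positivity of U somewhere
    have hposU : ∃ t₀, T < t₀ ∧ 0 < U t₀ := by
      by_contra h
      push_neg at h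
      have hev : ∀ᶠ y in atTop, U (Real.exp (y * 2)) / U (Real.exp y) ≤ 1 := by
        filter_upwards [eventually_ge_atTop (Real.log T + 1)] with y hy
        have hlogT : 0 < Real.log T := Real.log_pos hT1
        have hy0 : 0 < y := by linarith
        have h1 : T < Real.exp y := by
          calc T = Real.exp (Real.log T) := (Real.exp_log hTpos).symm
          _ < Real.exp y := Real.exp_lt_exp.2 (by linarith)
        have h2 : Real.exp y ≤ Real.exp (y * 2) := Real.exp_le_exp.2 (by nlinarith)
        have hU1 := h _ h1
        have hm := Umono _ _ h1 h2
        rcases eq_or_lt_of_le hU1 with h0 | h0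
        · rw [h0, div_zero]; norm_num
        · rw [div_le_one_iff]
          right; right; exact ⟨h0, hm⟩
      have hle := le_of_tendsto (hRV 2 (by norm_num)) hev
      have h2 : (1:ℝ) < 2 ^ ρ :=
        (Real.one_lt_rpow_iff_of_pos (by norm_num)).2 (Or.inl ⟨one_lt_two, hρ⟩)
      linarith
    obtain ⟨t₀, ht₀T, ht₀⟩ := hposU
    have ht₀pos : 0 < t₀ := lt_trans hTpos ht₀T
    have qpos : ∀ᶠ y in atTop, 0 < U (Real.exp y) := by
      filter_upwards [eventually_ge_atTop (Real.log t₀ + 1)] with y hy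
      have h1 : t₀ ≤ Real.exp y := by
        calc t₀ = Real.exp (Real.log t₀) := (Real.exp_log ht₀pos).symm
        _ ≤ Real.exp y := Real.exp_le_exp.2 (by linarith)
      exact lt_of_lt_of_le ht₀ (Umono _ _ ht₀T h1)
    -- main part
    intro x hx
    have hc : 0 < x ^ (1/ρ) := Real.rpow_pos_of_pos hx _
    have hxid : (x ^ (1/ρ)) ^ ρ = x := by
      rw [← Real.rpow_mul hx.le, one_div_mul_cancel (ne_of_gt hρ), Real.rpow_one]
    have key : ∀ l₁ l₂ : ℝ, 0 < l₁ → l₁ < x ^ (1/ρ) → x ^ (1/ρ) < l₂ →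
        ∀ᶠ y in atTop, l₁ ≤ -(Real.log (1 - F (x * U (Real.exp y)))) / y ∧
          -(Real.log (1 - F (x * U (Real.exp y)))) / y < l₂ := by
      intro l₁ l₂ hl₁ hl₁c hl₂c
      have hl₂ : 0 < l₂ := lt_trans hc hl₂c
      have hx1 : l₁ ^ ρ < x := by
        calc l₁ ^ ρ < (x ^ (1/ρ)) ^ ρ := Real.rpow_lt_rpow hl₁.le hl₁c hρ
        _ = x := hxid
      have hx2 : x < l₂ ^ ρ := by
        calc x = (x ^ (1/ρ)) ^ ρ := hxid.symm
        _ < l₂ ^ ρ := Real.rpow_lt_rpow hc.le hl₂c hρ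
      have E1 : ∀ᶠ y in atTop, U (Real.exp (y * l₁)) / U (Real.exp y) < x :=
        (hRV l₁ hl₁).eventually_lt_const hx1
      have E2 : ∀ᶠ y in atTop, x < U (Real.exp (y * l₂)) / U (Real.exp y) :=
        (hRV l₂ hl₂).eventually_const_lt hx2
      have E4 : ∀ᶠ y in atTop, T < Real.exp (y * l₁) := by
        filter_upwards [eventually_ge_atTop ((Real.log T + 1)/l₁)] with y hy
        rw [div_le_iff₀ hl₁] at hy
        calc T = Real.exp (Real.log T) := (Real.exp_log hTpos).symm
        _ < Real.exp (y * l₁) := Real.exp_lt_exp.2 (by linarith)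
      have E5 : ∀ᶠ y in atTop, T < Real.exp (y * l₂) := by
        filter_upwards [eventually_ge_atTop ((Real.log T + 1)/l₂)] with y hy
        rw [div_le_iff₀ hl₂] at hy
        calc T = Real.exp (Real.log T) := (Real.exp_log hTpos).symm
        _ < Real.exp (y * l₂) := Real.exp_lt_exp.2 (by linarith)
      filter_upwards [E1, E2, E4, E5, qpos, eventually_gt_atTop 0]
        with y h1 h2 h4 h5 hq hy0
      set u := U (Real.exp y) with hu
      have hxu1 : U (Real.exp (y * l₁)) < x * u := by
        rw [div_lt_iff₀ hq] at h1; nlinarith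
      have hxu2 : x * u < U (Real.exp (y * l₂)) := by
        rw [lt_div_iff₀ hq] at h2; nlinarith
      have ht₁1 : 1 < Real.exp (y * l₁) := lt_trans hT1 h4
      have ht₂1 : 1 < Real.exp (y * l₂) := lt_trans hT1 h5
      obtain ⟨w₂, hw₂⟩ := neS _ ht₂1
      have hsinf₂ : U (Real.exp (y * l₂)) ≤ w₂ := by
        rw [hU]; exact csInf_le (bddS _ h5) hw₂
      have hFw₂ := (memS _ ht₂1 w₂).1 hw₂
      have hFxu1 : F (x*u) < 1 :=
        lt_of_le_of_lt (hFmono (by linarith : x*u ≤ w₂)) hFw₂.2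
      have hclaim1 : F (x*u) < 1 - 1 / Real.exp (y * l₂) := by
        by_contra hcon
        push_neg at hcon
        have hmem : Real.exp (y * l₂) ≤ 1 / (1 - F (x*u)) :=
          (memS _ ht₂1 _).2 ⟨hcon, hFxu1⟩
        have : U (Real.exp (y * l₂)) ≤ x*u := by
          rw [hU]; exact csInf_le (bddS _ h5) hmem
        linarith
      have hsinf₁ : sInf {z : ℝ | Real.exp (y * l₁) ≤ 1 / (1 - F z)} < x*u := by
        rw [← hU]; exact hxu1
      obtain ⟨w₁, hw₁mem, hw₁lt⟩ := exists_lt_of_csInf_lt (neS _ ht₁1) hsinf₁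
      have hFw₁ := (memS _ ht₁1 w₁).1 hw₁mem
      have hclaim2 : 1 - 1 / Real.exp (y * l₁) ≤ F (x*u) :=
        le_trans hFw₁.1 (hFmono hw₁lt.le)
      have hexp₂ : 0 < 1 / Real.exp (y * l₂) := by positivity
      have hg : 0 < 1 - F (x*u) := by linarith
      have hlog1 : Real.log (1 - F (x*u)) ≤ -(y * l₁) := by
        rw [Real.log_le_iff_le_exp hg, Real.exp_neg]
        calc 1 - F (x*u) ≤ 1 / Real.exp (y * l₁) := by linarith
        _ = (Real.exp (y * l₁))⁻¹ := one_div _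
      have hlog2 : -(y * l₂) < Real.log (1 - F (x*u)) := by
        rw [Real.lt_log_iff_exp_lt hg, Real.exp_neg]
        calc (Real.exp (y * l₂))⁻¹ = 1 / Real.exp (y * l₂) := (one_div _).symm
        _ < 1 - F (x*u) := by linarith
      constructor
      · rw [le_div_iff₀ hy0]; linarith [mul_comm l₁ y, hlog1]
      · rw [div_lt_iff₀ hy0]; linarith [mul_comm l₂ y, hlog2]
    rw [tendsto_order]
    constructor
    · intro a ha
      have hm0 : (0:ℝ) ≤ max a 0 := le_max_right a 0
      have hmc : max a 0 < x ^ (1/ρ) := max_lt ha hc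
      have ham : a ≤ max a 0 := le_max_left a 0
      filter_upwards [key ((max a 0 + x ^ (1/ρ))/2) (x ^ (1/ρ) + 1)
        (by linarith) (by linarith) (by linarith)] with y hy
      linarith [hy.1]
    · intro b hb
      filter_upwards [key (x ^ (1/ρ)/2) ((x ^ (1/ρ) + b)/2)
        (by linarith) (by linarith) (by linarith)] with y hy
      linarith [hy.2]
  · -- degenerate case: contradiction with hRV
    exfalso
    push_neg at htail
    obtain ⟨c, hc1, hc2⟩ := htail
    set c' : ℝ := max c 0 with hc'def
    have hc'1 : c' < 1 := max_lt hc1 one_pos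
    have hc'pos : 0 < 1 - c' := by linarith
    have hdich : ∀ z, F z = 1 ∨ F z < c' := by
      intro z
      by_cases h : c' ≤ F z
      · exact Or.inl (le_antisymm (hF1 z) (hc2 z (le_trans (le_max_left c 0) h)))
      · exact Or.inr (lt_of_not_ge h)
    have Sempty : ∀ t : ℝ, 1/(1 - c') < t → {z : ℝ | t ≤ 1 / (1 - F z)} = ∅ := by
      intro t ht
      have hBpos : 0 < 1/(1 - c') := by positivity
      have htpos : 0 < t := lt_trans hBpos ht
      rw [Set.eq_empty_iff_forall_notMem]
      intro z hz
      rcases hdich z with h | h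
      · simp only [Set.mem_setOf_eq, h, sub_self, div_zero] at hz
        linarith
      · have hpos : 0 < 1 - F z := by linarith
        have : 1/(1 - F z) < 1/(1 - c') := by
          apply one_div_lt_one_div_of_lt hc'pos; linarith
        have hz' : t ≤ 1/(1 - F z) := hz
        linarith
    have hzero : ∀ᶠ y in atTop, U (Real.exp (y * 2)) / U (Real.exp y) = 0 := by
      filter_upwards [eventually_ge_atTop (max 1 (Real.log (1/(1 - c')) + 1))] with y hy
      have hy1 : 1 ≤ y := le_trans (le_max_left _ _) hy
      have hylog : Real.log (1/(1 - c')) + 1 ≤ y := le_trans (le_max_right _ _) hy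
      have hB : 0 < 1/(1 - c') := by positivity
      have h1 : 1/(1 - c') < Real.exp y := by
        calc 1/(1 - c') = Real.exp (Real.log (1/(1 - c'))) := (Real.exp_log hB).symm
        _ < Real.exp y := Real.exp_lt_exp.2 (by linarith)
      have h2 : 1/(1 - c') < Real.exp (y * 2) :=
        lt_of_lt_of_le h1 (Real.exp_le_exp.2 (by nlinarith))
      rw [hU, hU, Sempty _ h1, Sempty _ h2, Real.sInf_empty, div_zero]
    have h0 : Tendsto (fun y => U (Real.exp (y * 2)) / U (Real.exp y)) atTop (nhds 0) :=
      Tendsto.congr' (hzero.mono fun y h => h.symm) tendsto_const_nhds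
    have huniq := tendsto_nhds_unique h0 (hRV 2 two_pos)
    have h2 : (0:ℝ) < 2 ^ ρ := Real.rpow_pos_of_pos two_pos ρ
    linarith
end

section
/- Let U be nondecreasing with U ∈ ERV_γ for some γ < 0, i.e., (U(tλ)−U(t))/w(t) → h_γ(λ) for a positive function w. Set q := U ∘ exp. Then q(∞) := lim_{y→∞} q(y) is finite, and the ratio a_ξ(y) := [log|q(yξ²)−q(yξ)| − log|q(yξ)−q(y)|]/log ξ tends to −∞ as y → ∞, for any fixed ξ > 1. -/
open Filter Real

theorem stmt7 (U w : ℝ → ℝ) (γ : ℝ) (hγ : γ < 0)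
    (hmono : Monotone U)
    (hwpos : ∀ t, 0 < w t)
    (hERV : ∀ l : ℝ, 0 < l →
      Tendsto (fun t => (U (t * l) - U t) / w t) atTop (nhds (h γ l)))
    (ξ : ℝ) (hξ : 1 < ξ) :
    (∃ L : ℝ, Tendsto (fun y => U (Real.exp y)) atTop (nhds L)) ∧
    Tendsto
      (fun y =>
        (Real.log |U (Real.exp (y * ξ ^ (2 : ℕ))) - U (Real.exp (y * ξ))| -
            Real.log |U (Real.exp (y * ξ)) - U (Real.exp y)|) / Real.log ξ)
      atTop atBot := by
  have hγ0 : γ ≠ 0 := ne_of_lt hγ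
  set c : ℝ := ((2:ℝ) ^ γ - 1) / γ with hc_def
  have h2γpos : (0:ℝ) < (2:ℝ) ^ γ := Real.rpow_pos_of_pos two_pos γ
  have h2γlt1 : (2:ℝ) ^ γ < 1 := Real.rpow_lt_one_of_one_lt_of_neg one_lt_two hγ
  have hcpos : 0 < c := div_pos_of_neg_of_neg (by linarith) hγ
  set ρ : ℝ := (1 + (2:ℝ) ^ γ) / 2 with hρ_def
  have hρlt1 : ρ < 1 := by rw [hρ_def]; linarith
  have hρgt : (2:ℝ) ^ γ < ρ := by rw [hρ_def]; linarith
  have hρpos : 0 < ρ := lt_trans h2γpos hρgt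
  have h1ρ : (0:ℝ) < 1 - ρ := by linarith
  set δ : ℝ := (ρ - (2:ℝ) ^ γ) * c / (1 + ρ) with hδ_def
  have hδpos : 0 < δ := div_pos (mul_pos (by linarith) hcpos) (by linarith)
  have hδeq : δ * (1 + ρ) = (ρ - (2:ℝ) ^ γ) * c := by
    rw [hδ_def]; field_simp
  have hcδ : 0 < c - δ := by nlinarith [hδeq]
  set d : ℝ → ℝ := fun t => U (t * 2) - U t with hd_def
  -- limits at λ = 2 and λ = 4
  have hval2 : h γ 2 = c := by simp only [h, if_neg hγ0, hc_def]
  have hval4 : h γ 4 = (2:ℝ) ^ γ * c + c := by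
    have h4 : (4:ℝ) ^ γ = (2:ℝ) ^ γ * (2:ℝ) ^ γ := by
      rw [show (4:ℝ) = 2 * 2 by norm_num, Real.mul_rpow (by norm_num) (by norm_num)]
    simp only [h, if_neg hγ0, hc_def, h4]
    field_simp
    ring
  have hT2 : Tendsto (fun t => d t / w t) atTop (nhds c) := by
    have := hERV 2 two_pos; rwa [hval2] at this
  have hT42 : Tendsto (fun t => d (t * 2) / w t) atTop (nhds ((2:ℝ) ^ γ * c)) := by
    have h4 := hERV 4 (by norm_num)
    rw [hval4] at h4
    have hsub := h4.sub (by have := hERV 2 two_pos; rwa [hval2] at this)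
    have heq : ∀ t : ℝ, (U (t * 4) - U t) / w t - (U (t * 2) - U t) / w t = d (t * 2) / w t := by
      intro t
      rw [div_sub_div_same, hd_def]
      have : t * 2 * 2 = t * 4 := by ring
      simp only [this]
      ring_nf
    have := Tendsto.congr heq hsub
    simpa using this
  -- eventual key inequalities
  have hEv1 : ∀ᶠ t in atTop, (c - δ) * w t < d t := by
    filter_upwards [hT2.eventually (eventually_gt_nhds (show c - δ < c by linarith))] with t ht
    exact (lt_div_iff₀ (hwpos t)).mp ht
  have hEv2 : ∀ᶠ t in atTop, d (t * 2) < ((2:ℝ) ^ γ * c + δ) * w t := by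
    filter_upwards [hT42.eventually
      (eventually_lt_nhds (show (2:ℝ) ^ γ * c < (2:ℝ) ^ γ * c + δ by linarith))] with t ht
    exact (div_lt_iff₀ (hwpos t)).mp ht
  obtain ⟨t₁, H⟩ := eventually_atTop.mp (hEv1.and hEv2)
  set t₀ : ℝ := max t₁ 1 with ht₀_def
  have ht₀1 : (1:ℝ) ≤ t₀ := le_max_right _ _
  have ht₀pos : (0:ℝ) < t₀ := lt_of_lt_of_le one_pos ht₀1
  have hkey : ∀ t, t₀ ≤ t → 0 < d t ∧ d (t * 2) ≤ ρ * d t := by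
    intro t ht
    obtain ⟨h1, h2⟩ := H t (le_trans (le_max_left _ _) ht)
    have hwt := hwpos t
    refine ⟨lt_trans (mul_pos hcδ hwt) h1, ?_⟩
    have heq : (2:ℝ) ^ γ * c + δ = ρ * (c - δ) := by linear_combination hδeq
    calc d (t * 2) ≤ ((2:ℝ) ^ γ * c + δ) * w t := h2.le
      _ = ρ * ((c - δ) * w t) := by rw [heq]; ring
      _ ≤ ρ * d t := mul_le_mul_of_nonneg_left h1.le hρpos.le
  have hgeo : ∀ t, t₀ ≤ t → ∀ k : ℕ, d (t * 2 ^ k) ≤ ρ ^ k * d t := by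
    intro t ht k
    induction k with
    | zero => simp
    | succ k ih =>
      have htpos : 0 < t := lt_of_lt_of_le ht₀pos ht
      have h1 : t₀ ≤ t * 2 ^ k :=
        le_trans ht (le_mul_of_one_le_right htpos.le (one_le_pow₀ one_le_two))
      have harg : t * 2 ^ (k + 1) = t * 2 ^ k * 2 := by ring
      calc d (t * 2 ^ (k + 1)) = d (t * 2 ^ k * 2) := by rw [harg]
        _ ≤ ρ * d (t * 2 ^ k) := (hkey _ h1).2
        _ ≤ ρ * (ρ ^ k * d t) := mul_le_mul_of_nonneg_left ih hρpos.le
        _ = ρ ^ (k + 1) * d t := by ring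
  have hsum : ∀ t, t₀ ≤ t → ∀ n : ℕ, U (t * 2 ^ n) ≤ U t + (1 - ρ ^ n) / (1 - ρ) * d t := by
    intro t ht n
    induction n with
    | zero => simp
    | succ n ih =>
      have harg : t * 2 ^ (n + 1) = t * 2 ^ n * 2 := by ring
      have hstep : U (t * 2 ^ n * 2) = U (t * 2 ^ n) + d (t * 2 ^ n) := by
        simp only [hd_def]; ring
      have hgeon := hgeo t ht n
      have halg : (1 - ρ ^ n) / (1 - ρ) + ρ ^ n = (1 - ρ ^ (n + 1)) / (1 - ρ) := by
        field_simp
        ring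
      calc U (t * 2 ^ (n + 1)) = U (t * 2 ^ n) + d (t * 2 ^ n) := by rw [harg, hstep]
        _ ≤ U t + (1 - ρ ^ n) / (1 - ρ) * d t + ρ ^ n * d t := add_le_add ih hgeon
        _ = U t + ((1 - ρ ^ n) / (1 - ρ) + ρ ^ n) * d t := by ring
        _ = U t + (1 - ρ ^ (n + 1)) / (1 - ρ) * d t := by rw [halg]
  have hsum' : ∀ t, t₀ ≤ t → ∀ n : ℕ, U (t * 2 ^ n) ≤ U t + d t / (1 - ρ) := by
    intro t ht n
    have h0 := hsum t ht n
    have hdt : 0 ≤ d t := (hkey t ht).1.le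
    have hρn : 0 ≤ ρ ^ n := pow_nonneg hρpos.le n
    have hle : (1 - ρ ^ n) / (1 - ρ) * d t ≤ d t / (1 - ρ) := by
      rw [div_mul_eq_mul_div, div_le_div_iff₀ h1ρ h1ρ]
      nlinarith [mul_nonneg (mul_nonneg hρn hdt) h1ρ.le]
    linarith
  have hbdd : BddAbove (Set.range U) := by
    refine ⟨U t₀ + d t₀ / (1 - ρ), ?_⟩
    rintro _ ⟨x, rfl⟩
    obtain ⟨n, hn⟩ := pow_unbounded_of_one_lt x (one_lt_two : (1:ℝ) < 2)
    have hx : x ≤ t₀ * 2 ^ n :=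
      le_trans hn.le (le_mul_of_one_le_left (by positivity) ht₀1)
    exact le_trans (hmono hx) (hsum' t₀ le_rfl n)
  have hL : Tendsto U atTop (nhds (⨆ x, U x)) := tendsto_atTop_ciSup hmono hbdd
  set L : ℝ := ⨆ x, U x with hL_def
  have hUleL : ∀ x, U x ≤ L := fun x => le_ciSup hbdd x
  have hDle : ∀ u, t₀ ≤ u → L - U u ≤ d u / (1 - ρ) := by
    intro u hu
    have hupos : 0 < u := lt_of_lt_of_le ht₀pos hu
    have htend : Tendsto (fun n : ℕ => U (u * 2 ^ n)) atTop (nhds L) :=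
      hL.comp ((tendsto_pow_atTop_atTop_of_one_lt one_lt_two).const_mul_atTop hupos)
    have := le_of_tendsto htend (Eventually.of_forall (hsum' u hu))
    linarith
  refine ⟨⟨L, hL.comp Real.tendsto_exp_atTop⟩, ?_⟩
  -- part 2
  have hlogρ : Real.log ρ < 0 := Real.log_neg hρpos hρlt1
  have hlogξ : 0 < Real.log ξ := Real.log_pos hξ
  have hlog2 : (0:ℝ) < Real.log 2 := Real.log_pos one_lt_two
  have hξ1 : (0:ℝ) < ξ - 1 := by linarith
  have hg : Tendsto (fun y : ℝ =>
      ((y * (ξ - 1) / Real.log 2 - 1) * Real.log ρ - Real.log (1 - ρ)) / Real.log ξ)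
      atTop atBot := by
    have hneg : Real.log ρ * ((ξ - 1) / Real.log 2) < 0 :=
      mul_neg_of_neg_of_pos hlogρ (div_pos hξ1 hlog2)
    have h1 : Tendsto (fun y : ℝ => (Real.log ρ * ((ξ - 1) / Real.log 2)) * y) atTop atBot :=
      Tendsto.const_mul_atTop_of_neg hneg tendsto_id
    have h2 := tendsto_atBot_add_const_right atTop (-Real.log ρ - Real.log (1 - ρ)) h1
    have h3 := h2.atBot_div_const hlogξ
    refine Tendsto.congr (fun y => ?_) h3
    ring
  refine tendsto_atBot_mono' atTop ?_ hg
  filter_upwards [eventually_ge_atTop (Real.log t₀),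
    eventually_ge_atTop (Real.log 2 / (ξ - 1)), eventually_ge_atTop (0:ℝ)] with y hy1 hy2 hy0
  have hTt₀ : t₀ ≤ Real.exp y := (Real.log_le_iff_le_exp ht₀pos).mp hy1
  have hy2' : Real.log 2 ≤ y * (ξ - 1) := (div_le_iff₀ hξ1).mp hy2
  have hexp2 : (2:ℝ) ≤ Real.exp (y * (ξ - 1)) := by
    rw [show (2:ℝ) = Real.exp (Real.log 2) from (Real.exp_log two_pos).symm]
    exact Real.exp_le_exp.mpr hy2'
  have heq1 : Real.exp (y * ξ) = Real.exp y * Real.exp (y * (ξ - 1)) := by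
    rw [← Real.exp_add]; congr 1; ring
  have h2T : Real.exp y * 2 ≤ Real.exp (y * ξ) := by
    rw [heq1]
    exact mul_le_mul_of_nonneg_left hexp2 (Real.exp_pos y).le
  have heq2 : Real.exp (y * ξ ^ (2:ℕ)) = Real.exp (y * ξ) * Real.exp (y * ξ * (ξ - 1)) := by
    rw [← Real.exp_add]; congr 1; ring
  have hexp2' : (2:ℝ) ≤ Real.exp (y * ξ * (ξ - 1)) := by
    rw [show (2:ℝ) = Real.exp (Real.log 2) from (Real.exp_log two_pos).symm]
    refine Real.exp_le_exp.mpr ?_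
    nlinarith [mul_nonneg (mul_nonneg hy0 hξ1.le) hξ1.le]
  have h2Tξ : Real.exp (y * ξ) * 2 ≤ Real.exp (y * ξ ^ (2:ℕ)) := by
    rw [heq2]
    exact mul_le_mul_of_nonneg_left hexp2' (Real.exp_pos _).le
  have hTξt₀ : t₀ ≤ Real.exp (y * ξ) := by
    linarith [hTt₀, h2T, (Real.exp_pos y).le]
  set k : ℕ := ⌊y * (ξ - 1) / Real.log 2⌋₊ with hk_def
  have hknn : 0 ≤ y * (ξ - 1) / Real.log 2 :=
    div_nonneg (mul_nonneg hy0 hξ1.le) hlog2.le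
  have hkle : (k : ℝ) * Real.log 2 ≤ y * (ξ - 1) := by
    have := Nat.floor_le hknn
    calc (k : ℝ) * Real.log 2 ≤ y * (ξ - 1) / Real.log 2 * Real.log 2 :=
        mul_le_mul_of_nonneg_right this hlog2.le
      _ = y * (ξ - 1) := by field_simp
  have h2k : (2:ℝ) ^ k ≤ Real.exp (y * (ξ - 1)) := by
    have : (2:ℝ) ^ k = Real.exp ((k : ℝ) * Real.log 2) := by
      rw [Real.exp_nat_mul, Real.exp_log two_pos]
    rw [this]
    exact Real.exp_le_exp.mpr hkle
  have hk2 : Real.exp y * 2 ^ k ≤ Real.exp (y * ξ) := by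
    rw [heq1]
    exact mul_le_mul_of_nonneg_left h2k (Real.exp_pos y).le
  have hkfloor : y * (ξ - 1) / Real.log 2 - 1 ≤ (k : ℝ) := (Nat.sub_one_lt_floor _).le
  -- positivity of the two differences
  have hdT : 0 < d (Real.exp y) := (hkey _ hTt₀).1
  have hdTξ : 0 < d (Real.exp (y * ξ)) := (hkey _ hTξt₀).1
  have hB : d (Real.exp y) ≤ U (Real.exp (y * ξ)) - U (Real.exp y) := by
    have := hmono h2T
    simp only [hd_def]
    linarith
  have hBpos : 0 < U (Real.exp (y * ξ)) - U (Real.exp y) := lt_of_lt_of_le hdT hB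
  have hA : d (Real.exp (y * ξ)) ≤ U (Real.exp (y * ξ ^ (2:ℕ))) - U (Real.exp (y * ξ)) := by
    have := hmono h2Tξ
    simp only [hd_def]
    linarith
  have hApos : 0 < U (Real.exp (y * ξ ^ (2:ℕ))) - U (Real.exp (y * ξ)) := lt_of_lt_of_le hdTξ hA
  -- upper bound on A
  have hAub : U (Real.exp (y * ξ ^ (2:ℕ))) - U (Real.exp (y * ξ)) ≤
      ρ ^ k * d (Real.exp y) / (1 - ρ) := by
    have e1 : U (Real.exp (y * ξ ^ (2:ℕ))) - U (Real.exp (y * ξ)) ≤ L - U (Real.exp (y * ξ)) :=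
      sub_le_sub_right (hUleL _) _
    have e2 : L - U (Real.exp (y * ξ)) ≤ L - U (Real.exp y * 2 ^ k) := by
      have := hmono hk2; linarith
    have ht₀k : t₀ ≤ Real.exp y * 2 ^ k :=
      le_trans hTt₀ (le_mul_of_one_le_right (Real.exp_pos y).le (one_le_pow₀ one_le_two))
    have e3 : L - U (Real.exp y * 2 ^ k) ≤ d (Real.exp y * 2 ^ k) / (1 - ρ) := hDle _ ht₀k
    have e4 : d (Real.exp y * 2 ^ k) / (1 - ρ) ≤ ρ ^ k * d (Real.exp y) / (1 - ρ) :=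
      (div_le_div_iff_of_pos_right h1ρ).mpr (hgeo _ hTt₀ k)
    linarith
  have hρkpos : (0:ℝ) < ρ ^ k := pow_pos hρpos k
  have hlogA : Real.log (U (Real.exp (y * ξ ^ (2:ℕ))) - U (Real.exp (y * ξ))) ≤
      (k : ℝ) * Real.log ρ + Real.log (d (Real.exp y)) - Real.log (1 - ρ) := by
    have := Real.log_le_log hApos hAub
    rw [Real.log_div (by positivity) h1ρ.ne', Real.log_mul hρkpos.ne' hdT.ne',
      Real.log_pow] at this
    linarith
  have hlogB : Real.log (d (Real.exp y)) ≤
      Real.log (U (Real.exp (y * ξ)) - U (Real.exp y)) := Real.log_le_log hdT hB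
  -- conclude
  rw [abs_of_pos hApos, abs_of_pos hBpos]
  have hkρ : (k : ℝ) * Real.log ρ ≤ (y * (ξ - 1) / Real.log 2 - 1) * Real.log ρ :=
    mul_le_mul_of_nonpos_right hkfloor hlogρ.le
  exact (div_le_div_iff_of_pos_right hlogξ).mpr (by linarith)
end

section
/- Let U be nondecreasing with finite limit U(∞) < ∞, let q := U ∘ exp, and let ρ̃ : ℝ → ℝ and g̃ : ℝ → (0,∞) satisfy ρ̃(y) → −∞ and g̃(y)·h_{ρ̃(y)}(ξ) = q(yξ) − q(y) · (1+o(1)) for some fixed ξ > 1, where h_a(λ) = (λ^a−1)/a. Define the penultimate GW approximation q̃_y(z) := q(y) + g̃(y) h_{ρ̃(y)}(z/y). Then sup_{z ≥ y} |q̃_y(z) − q(z)| → 0 as y → ∞. -/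
open Filter Real

theorem stmt8 (U : ℝ → ℝ) (L : ℝ) (ρt gt : ℝ → ℝ) (ξ : ℝ) (hξ : 1 < ξ)
    (hmono : Monotone U)
    (hlim : Tendsto U atTop (nhds L))
    (hρt : Tendsto ρt atTop atBot)
    (hgtpos : ∀ y, 0 < gt y)
    (hgt : Tendsto
      (fun y => gt y * h (ρt y) ξ /
        (U (Real.exp (y * ξ)) - U (Real.exp y))) atTop (nhds 1)) :
    ∀ ε : ℝ, 0 < ε → ∀ᶠ y in atTop, ∀ z : ℝ, y ≤ z →
      |U (Real.exp y) + gt y * h (ρt y) (z / y) - U (Real.exp z)| < ε := by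
  intro ε hε
  have hqL : Tendsto (fun y => U (Real.exp y)) atTop (nhds L) :=
    hlim.comp Real.tendsto_exp_atTop
  -- D y → 0
  have hDlim : Tendsto (fun y => U (Real.exp (y * ξ)) - U (Real.exp y)) atTop (nhds 0) := by
    have h1 : Tendsto (fun y : ℝ => y * ξ) atTop atTop :=
      Tendsto.atTop_mul_const (by linarith) tendsto_id
    have h2 : Tendsto (fun y => U (Real.exp (y * ξ))) atTop (nhds L) := hqL.comp h1
    have := h2.sub hqL
    simpa using this
  -- eventually D ≠ 0
  have hDne : ∀ᶠ y in atTop, U (Real.exp (y * ξ)) - U (Real.exp y) ≠ 0 := by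
    have h3 : ∀ᶠ y in atTop,
        (1:ℝ)/2 < gt y * h (ρt y) ξ / (U (Real.exp (y * ξ)) - U (Real.exp y)) :=
      hgt.eventually (eventually_gt_nhds (by norm_num))
    filter_upwards [h3] with y hy hD0
    rw [hD0, div_zero] at hy
    norm_num at hy
  -- N y := gt y * h (ρt y) ξ → 0
  have hNlim : Tendsto (fun y => gt y * h (ρt y) ξ) atTop (nhds 0) := by
    have := hgt.mul hDlim
    rw [mul_zero] at this
    refine Tendsto.congr' ?_ this
    filter_upwards [hDne] with y hy
    field_simp
  -- ξ ^ ρt y → 0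
  have hξρ : Tendsto (fun y => ξ ^ ρt y) atTop (nhds 0) := by
    have hlogξ : 0 < Real.log ξ := Real.log_pos hξ
    have h4 : Tendsto (fun y => ρt y * Real.log ξ) atTop atBot :=
      Tendsto.atBot_mul_const hlogξ hρt
    have h5 : Tendsto (fun y => Real.exp (ρt y * Real.log ξ)) atTop (nhds 0) :=
      Real.tendsto_exp_atBot.comp h4
    refine Tendsto.congr' ?_ h5
    filter_upwards with y
    rw [Real.rpow_def_of_pos (by linarith : (0:ℝ) < ξ), mul_comm]
  -- M y → 0
  have hMlim : Tendsto (fun y => gt y * h (ρt y) ξ / (1 - ξ ^ ρt y)) atTop (nhds 0) := by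
    have h6 : Tendsto (fun y => (1:ℝ) - ξ ^ ρt y) atTop (nhds 1) := by
      have := (tendsto_const_nhds (x := (1:ℝ)) (f := atTop)).sub hξρ
      simpa using this
    have := hNlim.div h6 (by norm_num)
    rw [zero_div] at this
    exact this
  filter_upwards [eventually_gt_atTop 0, hρt.eventually (eventually_lt_atBot 0),
      hqL.eventually (eventually_gt_nhds (show L - ε/2 < L by linarith)),
      hMlim.eventually (eventually_lt_nhds (show (0:ℝ) < ε/2 by linarith))]
    with y hy0 hρneg hqclose hM z hz
  set ρ := ρt y with hρdef
  have hρ0 : ρ ≠ 0 := ne_of_lt hρneg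
  have hlam1 : 1 ≤ z / y := (one_le_div hy0).mpr hz
  have hlampos : 0 < z / y := by linarith
  have hA1 : ξ ^ ρ < 1 := Real.rpow_lt_one_of_one_lt_of_neg hξ hρneg
  have hA0 : 0 < ξ ^ ρ := Real.rpow_pos_of_pos (by linarith) ρ
  have hl1 : (z / y) ^ ρ ≤ 1 := Real.rpow_le_one_of_one_le_of_nonpos hlam1 hρneg.le
  have hl0 : 0 < (z / y) ^ ρ := Real.rpow_pos_of_pos hlampos ρ
  have hhval : h ρ (z / y) = ((z / y) ^ ρ - 1) / ρ := if_neg hρ0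
  have hhξ : h ρ ξ = (ξ ^ ρ - 1) / ρ := if_neg hρ0
  -- 0 ≤ h ρ (z/y) ≤ -1/ρ
  have hge : 0 ≤ h ρ (z / y) := by
    rw [hhval, div_nonneg_iff]
    right
    constructor <;> linarith
  have hle : h ρ (z / y) ≤ -1 / ρ := by
    have h8 : (z / y) ^ ρ / ρ ≤ 0 := div_nonpos_iff.mpr (Or.inl ⟨hl0.le, hρneg.le⟩)
    rw [hhval, sub_div, neg_div]
    linarith
  -- gt y * (-1/ρ) = M y
  have hMeq : gt y * (-1 / ρ) = gt y * h ρ ξ / (1 - ξ ^ ρ) := by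
    rw [hhξ, eq_div_iff (by linarith : (1:ℝ) - ξ ^ ρ ≠ 0)]
    field_simp
    ring
  have hTle : gt y * h ρ (z / y) < ε / 2 := by
    have h7 : gt y * h ρ (z / y) ≤ gt y * (-1 / ρ) :=
      mul_le_mul_of_nonneg_left hle (hgtpos y).le
    rw [hMeq] at h7
    exact lt_of_le_of_lt h7 hM
  have hTge : 0 ≤ gt y * h ρ (z / y) := mul_nonneg (hgtpos y).le hge
  have hq1 : U (Real.exp y) ≤ U (Real.exp z) := hmono (Real.exp_le_exp.mpr hz)
  have hq2 : U (Real.exp z) ≤ L := by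
    refine ge_of_tendsto hqL ?_
    filter_upwards [eventually_ge_atTop z] with w hw
    exact hmono (Real.exp_le_exp.mpr hw)
  rw [abs_lt]
  constructor <;> linarith
end

section
/- Let q ∈ ERV_ρ(g): (q(yλ)−q(y))/g(y) → h_ρ(λ) locally uniformly in λ > 0, with q nondecreasing, q ≥ some positive constant eventually. Let ρ̃ : ℝ → ℝ with ρ̃(y) → ρ and g̃ positive with g̃(y) ~ g(y) as y → ∞. Define q̃_y(z) := q(y) + g̃(y) h_{ρ̃(y)}(z/y). Then for every Λ > 1, sup_{λ ∈ [1/Λ, Λ]} |(q̃_y(yλ) − q(yλ))/q(y)| → 0 as y → ∞. -/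
open Filter Real Topology

lemma h_contAt {l : ℝ} (hl : 0 < l) (ρ : ℝ) : ContinuousAt (fun r => h r l) ρ := by
  rcases eq_or_ne ρ 0 with rfl | hρ
  · have hd : HasDerivAt (fun r : ℝ => Real.exp (Real.log l * r)) (Real.log l) 0 := by
      simpa using ((hasDerivAt_id (0:ℝ)).const_mul (Real.log l)).exp
    have hslope : Tendsto (slope (fun r : ℝ => Real.exp (Real.log l * r)) 0) (𝓝[≠] 0)
        (𝓝 (Real.log l)) := hasDerivAt_iff_tendsto_slope.mp hd
    have h1 : Tendsto (fun r => h r l) (𝓝[≠] 0) (𝓝 (Real.log l)) := by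
      refine hslope.congr' ?_
      filter_upwards [self_mem_nhdsWithin] with r hr
      have hr' : r ≠ 0 := hr
      simp only [slope_def_field, h, if_neg hr', Real.rpow_def_of_pos hl, mul_zero,
        Real.exp_zero, sub_zero]
    have h2 : Tendsto (fun r => h r l) (pure (0:ℝ)) (𝓝 (Real.log l)) := by
      rw [tendsto_pure_left]
      intro s hs
      have h0 : h 0 l = Real.log l := by simp [h]
      show h 0 l ∈ s
      rw [h0]
      exact mem_of_mem_nhds hs
    have h3 : Tendsto (fun r => h r l) (𝓝[≠] (0:ℝ) ⊔ pure 0) (𝓝 (Real.log l)) :=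
      tendsto_sup.mpr ⟨h1, h2⟩
    rw [nhdsNE_sup_pure] at h3
    have h0 : h 0 l = Real.log l := by simp [h]
    rw [ContinuousAt, h0]
    exact h3
  · have hc : ContinuousAt (fun r : ℝ => (Real.exp (Real.log l * r) - 1) / r) ρ :=
      ((Real.continuous_exp.comp (continuous_const.mul continuous_id)).sub
        continuous_const).continuousAt.div continuousAt_id hρ
    refine hc.congr ?_
    filter_upwards [eventually_ne_nhds hρ] with r hr
    simp [h, if_neg hr, Real.rpow_def_of_pos hl]

lemma h_monoOn (ρ' : ℝ) : MonotoneOn (h ρ') (Set.Ioi (0:ℝ)) := by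
  intro x hx y hy hxy
  simp only [h]
  split_ifs with hr
  · exact Real.log_le_log hx hxy
  · rcases lt_or_gt_of_ne hr with hneg | hpos
    · have h1 : y ^ ρ' ≤ x ^ ρ' := Real.rpow_le_rpow_of_nonpos hx hxy hneg.le
      exact div_le_div_of_nonpos_of_le hneg.le (by linarith)
    · have h1 : x ^ ρ' ≤ y ^ ρ' := Real.rpow_le_rpow (le_of_lt hx) hxy hpos.le
      exact div_le_div_of_nonneg_right (by linarith) hpos.le

lemma h_half_neg (ρ : ℝ) : h ρ 2⁻¹ < 0 := by
  simp only [h]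
  split_ifs with hr
  · exact Real.log_neg (by norm_num) (by norm_num : (2:ℝ)⁻¹ < 1)
  · rcases lt_or_gt_of_ne hr with hneg | hpos
    · have h2 : (2:ℝ) ^ ρ < 1 :=
        Real.rpow_lt_one_of_one_lt_of_neg (by norm_num : (1:ℝ) < 2) hneg
      have h2p : 0 < (2:ℝ) ^ ρ := Real.rpow_pos_of_pos (by norm_num) _
      have h1 : (1:ℝ) < (2⁻¹ : ℝ) ^ ρ := by
        rw [Real.inv_rpow (by norm_num : (0:ℝ) ≤ 2)]
        exact one_lt_inv_iff₀.mpr ⟨h2p, h2⟩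
      exact div_neg_of_pos_of_neg (by linarith) hneg
    · have h1 : (2⁻¹ : ℝ) ^ ρ < 1 := Real.rpow_lt_one (by norm_num) (by norm_num) hpos
      exact div_neg_of_neg_of_pos (by linarith) hpos

/-- Pólya-type lemma: pointwise convergence of eventually-monotone functions to a
continuous limit on a compact interval is uniform. -/
lemma polya {F : ℝ → ℝ → ℝ} {f : ℝ → ℝ} {a b : ℝ} (hab : a < b)
    (hFmono : ∀ᶠ y in atTop, MonotoneOn (F y) (Set.Icc a b))
    (hf : ContinuousOn f (Set.Icc a b))
    (hconv : ∀ l ∈ Set.Icc a b, Tendsto (fun y => F y l) atTop (nhds (f l)))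
    {ε : ℝ} (hε : 0 < ε) :
    ∀ᶠ y in atTop, ∀ l ∈ Set.Icc a b, |F y l - f l| < ε := by
  have huc : UniformContinuousOn f (Set.Icc a b) :=
    (isCompact_Icc).uniformContinuousOn_of_continuous hf
  obtain ⟨δ, hδ, hδ'⟩ := (Metric.uniformContinuousOn_iff).mp huc (ε/2) (by positivity)
  obtain ⟨N, hN'⟩ := exists_nat_gt (max 0 ((b - a)/δ))
  have hN : (b - a)/δ < N := lt_of_le_of_lt (le_max_right _ _) hN'
  have hNpos : 0 < (N:ℝ) := lt_of_le_of_lt (le_max_left _ _) hN'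
  set s : ℝ := (b - a)/N with hs_def
  have hspos : 0 < s := div_pos (by linarith) hNpos
  have hsδ : s < δ := by
    rw [hs_def, div_lt_iff₀ hNpos]
    rw [div_lt_iff₀ hδ] at hN
    nlinarith
  set t : ℕ → ℝ := fun i => a + i * s with ht_def
  have hNs : (N:ℝ) * s = b - a := by
    rw [hs_def]; field_simp
  have htmem : ∀ i : ℕ, i ≤ N → t i ∈ Set.Icc a b := by
    intro i hi
    have h1 : (i:ℝ) * s ≤ (N:ℝ) * s :=
      mul_le_mul_of_nonneg_right (by exact_mod_cast hi) hspos.le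
    have h0 : 0 ≤ (i:ℝ) * s := by positivity
    constructor
    · simp only [ht_def]; linarith
    · simp only [ht_def]; linarith
  have key : ∀ᶠ y in atTop, ∀ i ∈ Finset.range (N+1), |F y (t i) - f (t i)| < ε/2 := by
    rw [Filter.eventually_all_finset]
    intro i hi
    have hi' : i ≤ N := Nat.lt_succ_iff.mp (Finset.mem_range.mp hi)
    have h1 := Metric.tendsto_nhds.mp (hconv (t i) (htmem i hi')) (ε/2) (by positivity)
    simpa [Real.dist_eq] using h1
  filter_upwards [key, hFmono] with y hkey hmono
  intro l hl
  have hla : a ≤ l := hl.1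
  have hlb : l ≤ b := hl.2
  set j : ℕ := ⌊(l - a)/s⌋₊ with hj_def
  set i : ℕ := min j (N-1) with hi_def
  have hNge : 1 ≤ N := by exact_mod_cast hNpos
  have hiN : i + 1 ≤ N := by omega
  have hti_le : t i ≤ l := by
    have h1 : (i:ℝ) ≤ (j:ℝ) := by exact_mod_cast min_le_left j (N-1)
    have h2 : (j:ℝ) ≤ (l - a)/s := Nat.floor_le (div_nonneg (by linarith) hspos.le)
    have h3 : (i:ℝ) * s ≤ l - a := by
      rw [← le_div_iff₀ hspos]; linarith
    simp only [ht_def]; linarith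
  have hle_ti1 : l ≤ t (i+1) := by
    rcases le_or_gt j (N-1) with hc | hc
    · have hij : i = j := by omega
      have h2 : (l - a)/s < (j:ℝ) + 1 := Nat.lt_floor_add_one _
      have h3 : l - a < ((j:ℝ) + 1) * s := by
        rw [div_lt_iff₀ hspos] at h2; linarith
      simp only [ht_def, hij]
      push_cast
      linarith
    · have hiN1 : i + 1 = N := by omega
      have h4 : t (i+1) = b := by
        have hcast : ((i:ℝ)+1) = (N:ℝ) := by exact_mod_cast hiN1
        simp only [ht_def]
        push_cast
        rw [hcast]
        linarith
      linarith [h4.ge]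
  have hmem_i : t i ∈ Set.Icc a b := htmem i (by omega)
  have hmem_i1 : t (i+1) ∈ Set.Icc a b := htmem (i+1) hiN
  have hstep : t (i+1) - t i = s := by
    simp only [ht_def]; push_cast; ring
  have hdist1 : |l - t i| < δ := by
    rw [abs_of_nonneg (by linarith)]
    linarith
  have hdist2 : |l - t (i+1)| < δ := by
    rw [abs_of_nonpos (by linarith)]
    linarith
  have hfi : |f (t i) - f l| < ε/2 := by
    have h5 := hδ' (t i) hmem_i l hl (by rw [Real.dist_eq, abs_sub_comm]; exact hdist1)
    rwa [Real.dist_eq] at h5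
  have hfi1 : |f (t (i+1)) - f l| < ε/2 := by
    have h5 := hδ' (t (i+1)) hmem_i1 l hl (by rw [Real.dist_eq, abs_sub_comm]; exact hdist2)
    rwa [Real.dist_eq] at h5
  have hFi := hkey i (Finset.mem_range.mpr (by omega))
  have hFi1 := hkey (i+1) (Finset.mem_range.mpr (by omega))
  have hm1 : F y (t i) ≤ F y l := hmono hmem_i hl hti_le
  have hm2 : F y l ≤ F y (t (i+1)) := hmono hl hmem_i1 hle_ti1
  rw [abs_lt] at hFi hFi1 hfi hfi1 ⊢
  constructor <;> nlinarith [hFi.1, hFi.2, hFi1.1, hFi1.2, hfi.1, hfi.2, hfi1.1, hfi1.2]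

theorem stmt10 (q g ρt gt : ℝ → ℝ) (ρ : ℝ)
    (hmono : Monotone q)
    (hqpos : ∃ c : ℝ, 0 < c ∧ ∀ᶠ y in atTop, c ≤ q y)
    (hgpos : ∀ y, 0 < g y) (hgtpos : ∀ y, 0 < gt y)
    (hERV : ∀ l : ℝ, 0 < l →
      Tendsto (fun y => (q (y * l) - q y) / g y) atTop (nhds (h ρ l)))
    (hρt : Tendsto ρt atTop (nhds ρ))
    (hgt : Tendsto (fun y => gt y / g y) atTop (nhds 1)) :
    ∀ Λ : ℝ, 1 < Λ → ∀ ε : ℝ, 0 < ε → ∀ᶠ y in atTop,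
      ∀ l ∈ Set.Icc Λ⁻¹ Λ,
        |(q y + gt y * h (ρt y) l - q (y * l)) / q y| < ε := by
  obtain ⟨c, hc, hqc⟩ := hqpos
  intro Λ hΛ ε hε
  have hΛ0 : 0 < Λ := by linarith
  have hainv : 0 < Λ⁻¹ := by positivity
  have hab : Λ⁻¹ < Λ := lt_trans (inv_lt_one_of_one_lt₀ hΛ) hΛ
  have hsubset : Set.Icc Λ⁻¹ Λ ⊆ Set.Ioi (0:ℝ) := fun x hx => lt_of_lt_of_le hainv hx.1
  -- the bound on g/q
  obtain ⟨b0, hb0, hb0_eq⟩ : ∃ b0 : ℝ, 0 < b0 ∧ h ρ 2⁻¹ = -b0 :=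
    ⟨-h ρ 2⁻¹, by linarith [h_half_neg ρ], by ring⟩
  have hev1 : ∀ᶠ y in atTop, (q (y * 2⁻¹) - q y) / g y < -b0/2 :=
    (hERV 2⁻¹ (by norm_num)).eventually_lt_const (by rw [hb0_eq]; linarith)
  have hev2 : ∀ᶠ y in atTop, c ≤ q (y * 2⁻¹) :=
    (Tendsto.atTop_mul_const (by norm_num : (0:ℝ) < 2⁻¹) tendsto_id).eventually hqc
  have hbound : ∀ᶠ y in atTop, 0 < q y ∧ g y / q y < 2 / b0 := by
    filter_upwards [hev1, hev2] with y h1 h2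
    have hgy := hgpos y
    have h3 : q (y * 2⁻¹) - q y < -b0/2 * g y := by
      rw [div_lt_iff₀ hgy] at h1; linarith
    have hb0g : 0 < b0 * g y := mul_pos hb0 hgy
    have hprod : -b0 / 2 * g y = -(b0 * g y) / 2 := by ring
    have hq : 0 < q y := by linarith
    refine ⟨hq, ?_⟩
    rw [div_lt_div_iff₀ hq hb0]
    have hcomm : g y * b0 = b0 * g y := by ring
    linarith
  -- uniform convergence of the two pieces
  set ε₁ : ℝ := ε * b0 / 8 with hε₁_def
  have hε₁ : 0 < ε₁ := by positivity
  have hcontf : ContinuousOn (h ρ) (Set.Icc Λ⁻¹ Λ) := by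
    rcases eq_or_ne ρ 0 with rfl | hr
    · have hlog : ContinuousOn Real.log (Set.Icc Λ⁻¹ Λ) :=
        fun x hx => (Real.continuousAt_log (hsubset hx).ne').continuousWithinAt
      exact hlog.congr (fun x hx => by simp [h])
    · have hc2 : ContinuousOn (fun x : ℝ => (x ^ ρ - 1)/ρ) (Set.Icc Λ⁻¹ Λ) := by
        intro x hx
        exact (((Real.continuousAt_rpow_const x ρ
          (Or.inl (hsubset hx).ne')).continuousWithinAt).sub
          continuousWithinAt_const).div continuousWithinAt_const hr
      exact hc2.congr (fun x hx => by simp [h, if_neg hr])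
  have P1 : ∀ᶠ y in atTop, ∀ l ∈ Set.Icc Λ⁻¹ Λ,
      |(q (y * l) - q y) / g y - h ρ l| < ε₁ := by
    apply polya hab ?_ hcontf (fun l hl => hERV l (hsubset hl)) hε₁
    filter_upwards [eventually_gt_atTop (0:ℝ)] with y hy
    intro l₁ _ l₂ _ hl
    have : q (y * l₁) ≤ q (y * l₂) := hmono (by nlinarith)
    exact div_le_div_of_nonneg_right (by linarith) (hgpos y).le
  have P2 : ∀ᶠ y in atTop, ∀ l ∈ Set.Icc Λ⁻¹ Λ,
      |gt y / g y * h (ρt y) l - h ρ l| < ε₁ := by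
    apply polya hab ?_ hcontf ?_ hε₁
    · refine Eventually.of_forall (fun y => ?_)
      intro l₁ hl₁ l₂ hl₂ hl
      have hpos : 0 ≤ gt y / g y := le_of_lt (div_pos (hgtpos y) (hgpos y))
      exact mul_le_mul_of_nonneg_left
        (h_monoOn (ρt y) (hsubset hl₁) (hsubset hl₂) hl) hpos
    · intro l hl
      have hhc : Tendsto (fun y => h (ρt y) l) atTop (𝓝 (h ρ l)) :=
        ((h_contAt (hsubset hl) ρ).tendsto).comp hρt
      have := hgt.mul hhc
      rwa [one_mul] at this
  filter_upwards [P1, P2, hbound] with y h1 h2 ⟨hq0, hgq⟩ l hl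
  have hgy := hgpos y
  have hkey : (q y + gt y * h (ρt y) l - q (y * l)) / q y
      = g y / q y * (gt y / g y * h (ρt y) l - (q (y * l) - q y) / g y) := by
    field_simp
    ring
  rw [hkey, abs_mul, abs_of_pos (div_pos hgy hq0)]
  have habs : |gt y / g y * h (ρt y) l - (q (y * l) - q y) / g y| < 2 * ε₁ := by
    have a1 := abs_lt.mp (h1 l hl)
    have a2 := abs_lt.mp (h2 l hl)
    rw [abs_lt]
    constructor <;> linarith
  calc g y / q y * |gt y / g y * h (ρt y) l - (q (y * l) - q y) / g y|
      ≤ (2 / b0) * |gt y / g y * h (ρt y) l - (q (y * l) - q y) / g y| := by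
        apply mul_le_mul_of_nonneg_right hgq.le (abs_nonneg _)
    _ < (2 / b0) * (2 * ε₁) := by
        apply mul_lt_mul_of_pos_left habs (by positivity)
    _ = ε / 2 := by
        rw [hε₁_def]; field_simp; ring
    _ < ε := by linarith
end

section
/- Let q := U ∘ exp with U nondecreasing and eventually > 1, and suppose log q ∈ ERV_ρ(g): (log q(yλ) − log q(y))/g(y) → h_ρ(λ) locally uniformly in λ > 0. Let ρ̃(y) → ρ and g̃(y) ~ g(y) with g̃ positive. Define the penultimate log-GW approximation q̃ˡ_y(z) := q(y)·exp(g̃(y) h_{ρ̃(y)}(z/y)). Then for every Λ > 1, sup_{λ∈[1/Λ,Λ]} |(log q̃ˡ_y(yλ) − log q(yλ))/log q(y)| → 0 as y → ∞. -/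
open Filter Real Topology

noncomputable def phi (x : ℝ) : ℝ := if x = 0 then 1 else (Real.exp x - 1) / x

lemma phi_continuous : Continuous phi := by
  rw [continuous_iff_continuousAt]
  intro x
  rcases eq_or_ne x 0 with rfl | hx
  · have hd : HasDerivAt Real.exp 1 0 := by simpa using Real.hasDerivAt_exp 0
    have hs := hasDerivAt_iff_tendsto_slope.1 hd
    have h1 : Tendsto phi (𝓝[≠] (0:ℝ)) (𝓝 1) := by
      refine hs.congr' ?_
      filter_upwards [self_mem_nhdsWithin] with y hy
      simp only [Set.mem_compl_iff, Set.mem_singleton_iff] at hy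
      simp [slope, phi, hy, Real.exp_zero, div_eq_inv_mul]
    have h2 : Tendsto phi (pure (0:ℝ)) (𝓝 1) := by
      have : phi 0 = 1 := by simp [phi]
      simpa [this] using tendsto_pure_nhds phi 0
    have := h1.sup h2
    rw [nhdsNE_sup_pure] at this
    simpa [ContinuousAt, phi] using this
  · have hc : ContinuousAt (fun y => (Real.exp y - 1) / y) x :=
      (Real.continuous_exp.sub continuous_const).continuousAt.div continuousAt_id hx
    refine hc.congr ?_
    filter_upwards [eventually_ne_nhds hx] with y hy
    simp [phi, hy]

lemma h_eq (a l : ℝ) (hl : 0 < l) : h a l = Real.log l * phi (a * Real.log l) := by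
  rcases eq_or_ne a 0 with rfl | ha
  · simp [h, phi]
  · rcases eq_or_ne (Real.log l) 0 with hll | hll
    · have : l = 1 := by
        rcases (Real.log_eq_zero).1 hll with h0 | h0 | h0
        · exact absurd h0 (ne_of_gt hl)
        · exact h0
        · exact absurd h0 (by nlinarith)
      simp [h, ha, this, Real.one_rpow, hll]
    · have hml : a * Real.log l ≠ 0 := mul_ne_zero ha hll
      have hrp : l ^ a = Real.exp (a * Real.log l) := by
        rw [Real.rpow_def_of_pos hl, mul_comm]
      simp only [h, ha, if_neg ha, phi, if_neg hml, hrp, ↓reduceIte]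
      field_simp

lemma grid_mem (K : ℝ) (hK : 0 < K) (n : ℕ) (hn : 0 < n) (t : ℝ)
    (ht : t ∈ Set.Icc (-K) K) :
    ∃ i : ℕ, i + 1 ≤ n ∧ -K + 2*K*i/n ≤ t ∧ t ≤ -K + 2*K*(i+1)/n := by
  have hn' : (0:ℝ) < n := by exact_mod_cast hn
  set x := (t + K) * n / (2*K) with hx
  have htK : 0 ≤ t + K := by linarith [ht.1]
  have hx0 : 0 ≤ x := by positivity
  rcases le_or_gt (⌊x⌋₊ + 1) n with hle | hgt
  · refine ⟨⌊x⌋₊, hle, ?_, ?_⟩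
    · have h1 : (⌊x⌋₊ : ℝ) ≤ x := Nat.floor_le hx0
      have h2 : (⌊x⌋₊ : ℝ) * (2*K) ≤ (t + K) * n := by
        rw [hx] at h1
        calc (⌊x⌋₊ : ℝ) * (2*K) ≤ ((t + K) * n / (2*K)) * (2*K) := by
              apply mul_le_mul_of_nonneg_right h1 (by positivity)
          _ = (t + K) * n := by field_simp
      have : 2*K*(⌊x⌋₊:ℝ)/n ≤ t + K := by
        rw [div_le_iff₀ hn']; nlinarith
      linarith
    · have h1 : x < (⌊x⌋₊ : ℝ) + 1 := Nat.lt_floor_add_one x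
      have h2 : (t + K) * n < ((⌊x⌋₊:ℝ) + 1) * (2*K) := by
        rw [hx] at h1
        calc (t + K) * n = ((t + K) * n / (2*K)) * (2*K) := by field_simp
          _ < ((⌊x⌋₊:ℝ) + 1) * (2*K) := by
              apply mul_lt_mul_of_pos_right h1 (by positivity)
      have : t + K ≤ 2*K*((⌊x⌋₊:ℝ)+1)/n := by
        rw [le_div_iff₀ hn']; nlinarith
      linarith
  · have hnf : n ≤ ⌊x⌋₊ := by omega
    have hxn : (n:ℝ) ≤ x := le_trans (by exact_mod_cast hnf) (Nat.floor_le hx0)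
    have htK' : K ≤ t := by
      rw [hx, le_div_iff₀ (by positivity)] at hxn
      nlinarith
    have hteq : t = K := le_antisymm ht.2 htK'
    refine ⟨n - 1, by omega, ?_, ?_⟩
    · have hc : ((n-1:ℕ):ℝ) = (n:ℝ) - 1 := by
        have : (1:ℕ) ≤ n := hn
        push_cast [Nat.cast_sub this]; ring
      rw [hc, hteq]
      have h2 : 2 * K * ((n:ℝ) - 1) / n ≤ 2*K := by
        rw [div_le_iff₀ hn']; nlinarith
      linarith
    · have hc : ((n-1:ℕ):ℝ) + 1 = (n:ℝ) := by
        have : (1:ℕ) ≤ n := hn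
        push_cast [Nat.cast_sub this]; ring
      rw [hc, hteq]
      have : 2*K*(n:ℝ)/n = 2*K := by field_simp
      rw [this]; linarith
set_option maxHeartbeats 2000000 in
theorem stmt11 (U g ρt gt : ℝ → ℝ) (ρ : ℝ)
    (hmono : Monotone U)
    (hU1 : ∀ᶠ y in atTop, 1 < U (Real.exp y))
    (hgpos : ∀ y, 0 < g y) (hgtpos : ∀ y, 0 < gt y)
    (hERV : ∀ l : ℝ, 0 < l →
      Tendsto
        (fun y => (Real.log (U (Real.exp (y * l))) - Real.log (U (Real.exp y))) / g y)
        atTop (nhds (h ρ l)))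
    (hρt : Tendsto ρt atTop (nhds ρ))
    (hgt : Tendsto (fun y => gt y / g y) atTop (nhds 1)) :
    ∀ Λ : ℝ, 1 < Λ → ∀ ε : ℝ, 0 < ε → ∀ᶠ y in atTop,
      ∀ l ∈ Set.Icc Λ⁻¹ Λ,
        |(Real.log (U (Real.exp y) * Real.exp (gt y * h (ρt y) l)) -
            Real.log (U (Real.exp (y * l)))) / Real.log (U (Real.exp y))| < ε := by
  intro Λ hΛ ε hε
  have hΛ0 : 0 < Λ := lt_trans one_pos hΛ
  have hΛi : 0 < Λ⁻¹ := inv_pos.2 hΛ0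
  obtain ⟨L, hLdef⟩ : ∃ L : ℝ → ℝ, L = fun y => Real.log (U (Real.exp y)) := ⟨_, rfl⟩
  obtain ⟨K, hKdef⟩ : ∃ K : ℝ, K = Real.log Λ := ⟨_, rfl⟩
  have hK0 : 0 < K := hKdef ▸ Real.log_pos hΛ
  have hERVL : ∀ l : ℝ, 0 < l →
      Tendsto (fun y => (L (y * l) - L y) / g y) atTop (nhds (h ρ l)) := by
    intro l hl
    simpa only [hLdef] using hERV l hl
  have hκpos : 0 < -h ρ 2⁻¹ := by
    rcases eq_or_ne ρ 0 with rfl | hρ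
    · simp only [h, if_pos rfl, Real.log_inv]
      simpa using Real.log_pos (by norm_num : (1:ℝ) < 2)
    · simp only [h, if_neg hρ]
      rcases lt_or_gt_of_ne hρ with hneg | hpos
      · have h1 : 1 < (2⁻¹:ℝ) ^ ρ :=
          (Real.one_lt_rpow_iff_of_pos (by norm_num)).2 (Or.inr ⟨by norm_num, hneg⟩)
        have := div_neg_of_pos_of_neg (by linarith : (0:ℝ) < (2⁻¹:ℝ)^ρ - 1) hneg
        linarith
      · have h1 : (2⁻¹:ℝ) ^ ρ < 1 := Real.rpow_lt_one (by norm_num) (by norm_num) hpos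
        have := div_neg_of_neg_of_pos (by linarith : (2⁻¹:ℝ)^ρ - 1 < 0) hpos
        linarith
  obtain ⟨κ, hκdef⟩ : ∃ κ : ℝ, κ = -h ρ 2⁻¹ := ⟨_, rfl⟩
  have hκ : 0 < κ := hκdef ▸ hκpos
  obtain ⟨M, hMdef⟩ : ∃ M : ℝ, M = 2 / κ := ⟨_, rfl⟩
  have hM : 0 < M := by rw [hMdef]; positivity
  obtain ⟨ε₁, hε₁def⟩ : ∃ e : ℝ, e = ε / (2*(M+1)) := ⟨_, rfl⟩
  have hε₁ : 0 < ε₁ := by rw [hε₁def]; positivity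
  -- (B) : boundedness of g/L
  have hBdd : ∀ᶠ y in atTop, 0 < L y ∧ g y / L y ≤ M := by
    have E2 : ∀ᶠ y in atTop, 1 < U (Real.exp (y * 2⁻¹)) := by
      have ht2 : Tendsto (fun y : ℝ => y * 2⁻¹) atTop atTop :=
        Tendsto.atTop_mul_const (by norm_num) tendsto_id
      exact ht2.eventually hU1
    have E3 : ∀ᶠ y in atTop, (L (y * 2⁻¹) - L y) / g y < -κ / 2 :=
      (hERVL 2⁻¹ (by norm_num)).eventually_lt_const (by rw [hκdef]; linarith [hκpos])
    filter_upwards [hU1, E2, E3] with y h1 h2 h3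
    have hLy : 0 < L y := by rw [hLdef]; exact Real.log_pos h1
    have hLy2 : 0 ≤ L (y * 2⁻¹) := by rw [hLdef]; exact Real.log_nonneg (le_of_lt h2)
    refine ⟨hLy, ?_⟩
    have hgy := hgpos y
    rw [div_lt_iff₀ hgy] at h3
    rw [hMdef, div_le_div_iff₀ hLy hκ]
    linarith only [h3, hLy2]
  -- bounds on phi over a compact set
  obtain ⟨A, hAdef⟩ : ∃ A : ℝ, A = |ρ| + 1 := ⟨_, rfl⟩
  have hA0 : 0 < A := by rw [hAdef]; positivity
  have hρA : |ρ| ≤ A := by rw [hAdef]; linarith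
  obtain ⟨C, hC⟩ := isCompact_Icc.exists_bound_of_continuousOn
    (s := Set.Icc (-(A*K)) (A*K)) phi_continuous.continuousOn
  have hC' : ∀ x ∈ Set.Icc (-(A*K)) (A*K), |phi x| ≤ C := by
    intro x hx; simpa [Real.norm_eq_abs] using hC x hx
  have h0J : (0:ℝ) ∈ Set.Icc (-(A*K)) (A*K) := by
    have hAK : 0 ≤ A*K := le_of_lt (mul_pos hA0 hK0)
    constructor <;> linarith only [hAK]
  have hC1 : 1 ≤ C := by
    have := hC' 0 h0J
    simpa [phi] using this
  obtain ⟨H, hHdef⟩ : ∃ H : ℝ, H = K * C := ⟨_, rfl⟩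
  have hH0 : 0 < H := by
    rw [hHdef]; exact mul_pos hK0 (lt_of_lt_of_le one_pos hC1)
  -- uniform continuity of phi on the compact set
  have hUCphi := (isCompact_Icc (a := -(A*K)) (b := A*K)).uniformContinuousOn_of_continuous
    phi_continuous.continuousOn
  rw [Metric.uniformContinuousOn_iff] at hUCphi
  obtain ⟨δ, hδ0, hδ⟩ := hUCphi (ε₁/(2*(K+1))) (by positivity)
  -- ψ and its uniform continuity on Icc (-K) K
  obtain ⟨ψ, hψdef⟩ : ∃ ψ : ℝ → ℝ, ψ = fun t => t * phi (ρ * t) := ⟨_, rfl⟩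
  have hψcont : Continuous ψ := by
    rw [hψdef]
    exact continuous_id.mul (phi_continuous.comp (continuous_const.mul continuous_id))
  have hUCψ := (isCompact_Icc (a := -K) (b := K)).uniformContinuousOn_of_continuous
    hψcont.continuousOn
  rw [Metric.uniformContinuousOn_iff] at hUCψ
  obtain ⟨δ₂, hδ₂0, hδ₂⟩ := hUCψ (ε₁/4) (by positivity)
  have hψeq : ∀ s : ℝ, h ρ (Real.exp s) = ψ s := by
    intro s
    rw [h_eq ρ (Real.exp s) (Real.exp_pos s), Real.log_exp, hψdef]
  -- log bounds on Icc
  have hlogl : ∀ l ∈ Set.Icc Λ⁻¹ Λ, |Real.log l| ≤ K ∧ 0 < l := by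
    intro l hl
    have hl0 : 0 < l := lt_of_lt_of_le hΛi hl.1
    have hlow := Real.log_le_log hΛi hl.1
    rw [Real.log_inv] at hlow
    have hup := Real.log_le_log hl0 hl.2
    exact ⟨abs_le.2 ⟨by rw [hKdef]; linarith, by rw [hKdef]; linarith⟩, hl0⟩
  have hmemJ : ∀ a l, |a| ≤ A → l ∈ Set.Icc Λ⁻¹ Λ →
      a * Real.log l ∈ Set.Icc (-(A*K)) (A*K) := by
    intro a l ha hl
    have h1 := (hlogl l hl).1
    have : |a * Real.log l| ≤ A * K := by
      rw [abs_mul]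
      exact mul_le_mul ha h1 (abs_nonneg _) (le_of_lt hA0)
    exact abs_le.1 this
  have hhb : ∀ a l, |a| ≤ A → l ∈ Set.Icc Λ⁻¹ Λ → |h a l| ≤ H := by
    intro a l ha hl
    rw [h_eq a l (hlogl l hl).2, abs_mul, hHdef]
    exact mul_le_mul (hlogl l hl).1 (hC' _ (hmemJ a l ha hl)) (abs_nonneg _) (le_of_lt hK0)
  -- grid setup
  obtain ⟨n, hndef⟩ : ∃ n : ℕ, n = ⌈2*K/δ₂⌉₊ + 1 := ⟨_, rfl⟩
  have hnpos : 0 < n := by omega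
  have hn' : (0:ℝ) < n := by exact_mod_cast hnpos
  have hgap : 2*K/n < δ₂ := by
    have hle : 2*K/δ₂ ≤ (⌈2*K/δ₂⌉₊:ℝ) := Nat.le_ceil _
    have hn'' : (n:ℝ) = (⌈2*K/δ₂⌉₊:ℝ) + 1 := by rw [hndef]; push_cast; ring
    have h1 : 2*K/δ₂ < (n:ℝ) := by linarith
    rw [div_lt_iff₀ hn']
    rw [div_lt_iff₀ hδ₂0] at h1
    linarith only [h1]
  obtain ⟨tg, htgdef⟩ : ∃ tg : ℕ → ℝ, tg = fun i : ℕ => -K + 2*K*i/n := ⟨_, rfl⟩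
  have htgmem : ∀ i : ℕ, i ≤ n → tg i ∈ Set.Icc (-K) K := by
    intro i hi
    have hi' : (i:ℝ) ≤ n := by exact_mod_cast hi
    constructor
    · have : 0 ≤ 2*K*(i:ℝ)/n := by positivity
      simp only [htgdef]; linarith
    · simp only [htgdef]
      have : 2*K*(i:ℝ)/n ≤ 2*K := by
        rw [div_le_iff₀ hn']
        exact mul_le_mul_of_nonneg_left hi' (by positivity)
      linarith only [this]
  have hgap2 : ∀ i : ℕ, tg (i+1) - tg i = 2*K/n := by
    intro i
    have hnne : (n:ℝ) ≠ 0 := ne_of_gt hn'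
    simp only [htgdef]; push_cast; field_simp; ring
  -- eventual grid control
  have hGrid : ∀ᶠ y in atTop, ∀ i ∈ Finset.range (n+1),
      |(L (y * Real.exp (tg i)) - L y)/g y - h ρ (Real.exp (tg i))| < ε₁/4 := by
    rw [Filter.eventually_all_finset]
    intro i _
    have ht := hERVL (Real.exp (tg i)) (Real.exp_pos _)
    have := Metric.tendsto_nhds.1 ht (ε₁/4) (by positivity)
    simpa [Real.dist_eq] using this
  -- monotonicity threshold
  obtain ⟨y₀, hy₀⟩ := eventually_atTop.1 hU1
  have hLmono : ∀ u v : ℝ, y₀ ≤ u → u ≤ v → L u ≤ L v := by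
    intro u v hu huv
    rw [hLdef]
    exact Real.log_le_log (lt_trans one_pos (hy₀ u hu)) (hmono (Real.exp_le_exp.2 huv))
  -- eventual closeness of ρt, gt/g
  have hρtE : ∀ᶠ y in atTop, |ρt y - ρ| < min (δ/(K+1)) 1 := by
    have := Metric.tendsto_nhds.1 hρt (min (δ/(K+1)) 1) (lt_min (by positivity) one_pos)
    simpa [Real.dist_eq] using this
  have hgtE : ∀ᶠ y in atTop, |gt y / g y - 1| < ε₁/(2*(H+1)) := by
    have := Metric.tendsto_nhds.1 hgt (ε₁/(2*(H+1))) (by positivity)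
    simpa [Real.dist_eq] using this
  -- main filter_upwards
  filter_upwards [eventually_ge_atTop (max 1 (y₀ * Λ)), hGrid, hBdd, hρtE, hgtE, hU1]
    with y hy hgrid hbdd hρy hgy hUy
  have hy1 : (1:ℝ) ≤ y := le_trans (le_max_left _ _) hy
  have hy0 : 0 < y := lt_of_lt_of_le one_pos hy1
  have hyΛ : y₀ * Λ ≤ y := le_trans (le_max_right _ _) hy
  have hyΛi : y₀ ≤ y * Λ⁻¹ := by
    have h2 := mul_le_mul_of_nonneg_right hyΛ (le_of_lt hΛi)
    calc y₀ = y₀ * Λ * Λ⁻¹ := by field_simp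
      _ ≤ y * Λ⁻¹ := h2
  intro l hl
  have hl0 : 0 < l := (hlogl l hl).2
  have htIcc : Real.log l ∈ Set.Icc (-K) K := abs_le.1 (hlogl l hl).1
  obtain ⟨i, hin, hti, hti1⟩ := grid_mem K hK0 n hnpos (Real.log l) htIcc
  have htgi : tg i ≤ Real.log l := by simp only [htgdef]; exact hti
  have htgi1 : Real.log l ≤ tg (i+1) := by
    simp only [htgdef]; push_cast; exact hti1
  have hexpK : Real.exp (-K) = Λ⁻¹ := by
    rw [hKdef, Real.exp_neg, Real.exp_log hΛ0]
  have harg : ∀ s : ℝ, -K ≤ s → y₀ ≤ y * Real.exp s := by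
    intro s hs
    have h1 : Λ⁻¹ ≤ Real.exp s := by rw [← hexpK]; exact Real.exp_le_exp.2 hs
    have h2 : y * Λ⁻¹ ≤ y * Real.exp s := mul_le_mul_of_nonneg_left h1 (le_of_lt hy0)
    linarith only [hyΛi, h2]
  have hexpl : Real.exp (Real.log l) = l := Real.exp_log hl0
  have hmem_i : tg i ∈ Set.Icc (-K) K := htgmem i (by omega)
  have hmem_i1 : tg (i+1) ∈ Set.Icc (-K) K := htgmem (i+1) hin
  have hLa : L (y * Real.exp (tg i)) ≤ L (y * l) := by
    apply hLmono _ _ (harg _ hmem_i.1)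
    have h1 : Real.exp (tg i) ≤ l := by rw [← hexpl]; exact Real.exp_le_exp.2 htgi
    exact mul_le_mul_of_nonneg_left h1 (le_of_lt hy0)
  have hLc : L (y * l) ≤ L (y * Real.exp (tg (i+1))) := by
    have h1 : y₀ ≤ y * l := by rw [← hexpl]; exact harg _ htIcc.1
    apply hLmono _ _ h1
    have h2 : l ≤ Real.exp (tg (i+1)) := by rw [← hexpl]; exact Real.exp_le_exp.2 htgi1
    exact mul_le_mul_of_nonneg_left h2 (le_of_lt hy0)
  have hgy0 := hgpos y
  have hgi := hgrid i (Finset.mem_range.2 (by omega))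
  have hgi1 := hgrid (i+1) (Finset.mem_range.2 (by omega))
  have hψi : |ψ (tg i) - ψ (Real.log l)| < ε₁/4 := by
    have hd : dist (tg i) (Real.log l) < δ₂ := by
      rw [Real.dist_eq, abs_sub_comm, abs_of_nonneg (by linarith only [htgi])]
      have h5 := hgap2 i
      linarith only [h5, htgi1, hgap]
    have := hδ₂ (tg i) hmem_i (Real.log l) htIcc hd
    rwa [Real.dist_eq] at this
  have hψi1 : |ψ (tg (i+1)) - ψ (Real.log l)| < ε₁/4 := by
    have hd : dist (tg (i+1)) (Real.log l) < δ₂ := by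
      rw [Real.dist_eq, abs_of_nonneg (by linarith only [htgi1])]
      have h5 := hgap2 i
      linarith only [h5, htgi, hgap]
    have := hδ₂ (tg (i+1)) hmem_i1 (Real.log l) htIcc hd
    rwa [Real.dist_eq] at this
  have hhl : h ρ l = ψ (Real.log l) := by
    have := hψeq (Real.log l)
    rwa [hexpl] at this
  -- |B - h ρ l| < ε₁
  have hBclose : |(L (y * l) - L y)/g y - h ρ l| < ε₁ := by
    rw [hψeq] at hgi hgi1
    have hd1 : (L (y * Real.exp (tg i)) - L y)/g y ≤ (L (y * l) - L y)/g y :=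
      div_le_div_of_nonneg_right (by linarith only [hLa]) (le_of_lt hgy0)
    have hd2 : (L (y * l) - L y)/g y ≤ (L (y * Real.exp (tg (i+1))) - L y)/g y :=
      div_le_div_of_nonneg_right (by linarith only [hLc]) (le_of_lt hgy0)
    rw [hhl, abs_lt]
    have h1 := abs_lt.1 hgi
    have h2 := abs_lt.1 hgi1
    have h3 := abs_lt.1 hψi
    have h4 := abs_lt.1 hψi1
    constructor
    · linarith only [hd1, h1.1, h3.1, hε₁]
    · linarith only [hd2, h2.2, h4.2, hε₁]
  -- part (D)
  have haρ : |ρt y - ρ| < δ/(K+1) := lt_of_lt_of_le hρy (min_le_left _ _)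
  have haρ1 : |ρt y - ρ| < 1 := lt_of_lt_of_le hρy (min_le_right _ _)
  have haA : |ρt y| ≤ A := by
    have h1 : |ρt y| ≤ |ρt y - ρ| + |ρ| := by
      calc |ρt y| = |(ρt y - ρ) + ρ| := by ring_nf
        _ ≤ |ρt y - ρ| + |ρ| := abs_add_le _ _
    rw [hAdef]; linarith only [h1, haρ1]
  have hhd : |h (ρt y) l - h ρ l| < ε₁/2 := by
    rw [h_eq (ρt y) l hl0, h_eq ρ l hl0, ← mul_sub, abs_mul]
    have hdist : dist (ρt y * Real.log l) (ρ * Real.log l) < δ := by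
      rw [Real.dist_eq, ← sub_mul, abs_mul]
      have h1 : |ρt y - ρ| * |Real.log l| ≤ |ρt y - ρ| * K :=
        mul_le_mul_of_nonneg_left (hlogl l hl).1 (abs_nonneg _)
      have h2 : |ρt y - ρ| * K < (δ/(K+1)) * K := mul_lt_mul_of_pos_right haρ hK0
      have h3 : (δ/(K+1)) * K < δ := by
        rw [div_mul_eq_mul_div, div_lt_iff₀ (by positivity : (0:ℝ) < K+1)]
        linarith only [hδ0]
      linarith only [h1, h2, h3]
    have hph := hδ _ (hmemJ (ρt y) l haA hl) _ (hmemJ ρ l hρA hl) hdist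
    rw [Real.dist_eq] at hph
    have hb1 : |Real.log l| * |phi (ρt y * Real.log l) - phi (ρ * Real.log l)| ≤
        K * (ε₁/(2*(K+1))) :=
      mul_le_mul (hlogl l hl).1 (le_of_lt hph) (abs_nonneg _) (le_of_lt hK0)
    have hb2 : K * (ε₁/(2*(K+1))) < ε₁/2 := by
      rw [mul_div_assoc', div_lt_div_iff₀ (by positivity : (0:ℝ) < 2*(K+1))
        (by norm_num : (0:ℝ) < 2)]
      linarith only [hε₁]
    linarith only [hb1, hb2]
  have hAcl : |(gt y / g y) * h (ρt y) l - h ρ l| < ε₁ := by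
    have e1 : (gt y / g y) * h (ρt y) l - h ρ l =
        ((gt y / g y) - 1) * h (ρt y) l + (h (ρt y) l - h ρ l) := by ring
    rw [e1]
    have t1 : |((gt y / g y)-1) * h (ρt y) l| < ε₁/2 := by
      rw [abs_mul]
      have b1 : |(gt y / g y)-1| * |h (ρt y) l| ≤ |(gt y / g y)-1| * H :=
        mul_le_mul_of_nonneg_left (hhb (ρt y) l haA hl) (abs_nonneg _)
      have b2 : |(gt y / g y)-1| * H < (ε₁/(2*(H+1))) * H := mul_lt_mul_of_pos_right hgy hH0
      have b3 : (ε₁/(2*(H+1))) * H < ε₁/2 := by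
        rw [div_mul_eq_mul_div, div_lt_div_iff₀ (by positivity : (0:ℝ) < 2*(H+1))
          (by norm_num : (0:ℝ) < 2)]
        linarith only [hε₁]
      linarith only [b1, b2, b3]
    calc |((gt y / g y)-1) * h (ρt y) l + (h (ρt y) l - h ρ l)|
        ≤ |((gt y / g y)-1) * h (ρt y) l| + |h (ρt y) l - h ρ l| := abs_add_le _ _
      _ < ε₁/2 + ε₁/2 := add_lt_add t1 hhd
      _ = ε₁ := by ring
  -- final assembly
  have hU0 : (0:ℝ) < U (Real.exp y) := lt_trans one_pos hUy
  have e0 : (Real.log (U (Real.exp y) * Real.exp (gt y * h (ρt y) l)) -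
      Real.log (U (Real.exp (y * l)))) / Real.log (U (Real.exp y)) =
      ((gt y / g y) * h (ρt y) l - (L (y * l) - L y)/g y) * g y / L y := by
    rw [Real.log_mul (ne_of_gt hU0) (Real.exp_ne_zero _), Real.log_exp, hLdef]
    have hgne : g y ≠ 0 := ne_of_gt hgy0
    field_simp
    ring
  rw [e0, abs_div, abs_mul, abs_of_pos hgy0, abs_of_pos hbdd.1, mul_div_assoc]
  have hAB : |(gt y / g y) * h (ρt y) l - (L (y * l) - L y)/g y| < 2*ε₁ := by
    have h1 : |(gt y / g y) * h (ρt y) l - (L (y * l) - L y)/g y| ≤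
        |(gt y / g y) * h (ρt y) l - h ρ l| + |h ρ l - (L (y * l) - L y)/g y| :=
      abs_sub_le _ _ _
    have h2 : |h ρ l - (L (y * l) - L y)/g y| = |(L (y * l) - L y)/g y - h ρ l| :=
      abs_sub_comm _ _
    linarith only [h1, h2, hAcl, hBclose]
  have f1 : |(gt y / g y) * h (ρt y) l - (L (y * l) - L y)/g y| * (g y / L y) ≤
      |(gt y / g y) * h (ρt y) l - (L (y * l) - L y)/g y| * M :=
    mul_le_mul_of_nonneg_left hbdd.2 (abs_nonneg _)
  have f2 : |(gt y / g y) * h (ρt y) l - (L (y * l) - L y)/g y| * M < (2*ε₁) * M :=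
    mul_lt_mul_of_pos_right hAB hM
  have f3 : (2*ε₁) * M < ε := by
    rw [hε₁def]
    rw [show 2 * (ε / (2*(M+1))) * M = ε * M / (M+1) by field_simp]
    rw [div_lt_iff₀ (by positivity : (0:ℝ) < M+1)]
    linarith only [hε]
  linarith only [f1, f2, f3]
end

section
/- Let U be regularly varying at infinity with index γ > 0 and eventually > 1. Then for every ε ∈ (0, min(γ,1)) there exists y_ε > 0 such that for all y ≥ y_ε and all λ ≥ 1: y(λ−1)(γ−ε) − ε ≤ log U(exp(yλ)) − log U(exp(y)) ≤ y(λ−1)(γ+ε) + ε. -/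
open Filter Real

private lemma stmt15_aux_low (h δ γ ε η N : ℝ) (hh : 0 ≤ h) (hε : 0 < ε)
    (hδγ : δ * γ = ε / 2) (hA : (h - δ) * γ ≤ N * δ * γ) (hB : N * η ≤ h * (ε / 2)) :
    h * (γ - ε) - ε ≤ N * (δ * γ - η) := by
  nlinarith [mul_nonneg hh hε.le]

private lemma stmt15_aux_up (h δ γ ε η N : ℝ) (hh : 0 ≤ h) (hε : 0 < ε)
    (hδγ : δ * γ = ε / 2) (hη : η = ε * δ / 2) (hδhalf : δ < 1 / 2)
    (hA : N * δ * γ ≤ h * γ) (hB : N * η ≤ h * (ε / 2)) :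
    (N + 1) * (δ * γ + η) ≤ h * (γ + ε) + ε := by
  nlinarith [mul_nonneg hh hε.le, mul_lt_mul_of_pos_left hδhalf hε]

theorem stmt15 (U : ℝ → ℝ) (γ : ℝ) (hγ : 0 < γ)
    (hmono : Monotone U)
    (hU1 : ∀ᶠ t in atTop, 1 < U t)
    (hRV : ∀ μ : ℝ, 0 < μ →
      Tendsto (fun t => U (t * μ) / U t) atTop (nhds (μ ^ γ))) :
    ∀ ε : ℝ, 0 < ε → ε < min γ 1 →
      ∃ yε : ℝ, 0 < yε ∧ ∀ y ≥ yε, ∀ l ≥ (1 : ℝ),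
        y * (l - 1) * (γ - ε) - ε ≤
            Real.log (U (Real.exp (y * l))) - Real.log (U (Real.exp y)) ∧
          Real.log (U (Real.exp (y * l))) - Real.log (U (Real.exp y)) ≤
            y * (l - 1) * (γ + ε) + ε := by
  intro ε hε hεm
  have hεγ : ε < γ := lt_of_lt_of_le hεm (min_le_left _ _)
  set δ : ℝ := ε / (2 * γ) with hδdef
  have hδ : 0 < δ := by positivity
  have hδγ : δ * γ = ε / 2 := by
    rw [hδdef]; field_simp
  have hδhalf : δ < 1 / 2 := by
    rw [hδdef, div_lt_div_iff₀ (by positivity) (by norm_num)]; nlinarith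
  set η : ℝ := ε * δ / 2 with hηdef
  have hη : 0 < η := by positivity
  -- the one-step convergence
  have h1 := hRV (Real.exp δ) (Real.exp_pos δ)
  have hpow : Real.exp δ ^ γ = Real.exp (δ * γ) := by
    rw [Real.rpow_def_of_pos (Real.exp_pos δ), Real.log_exp]
  rw [hpow] at h1
  have h2 : Tendsto (fun t => Real.log (U (t * Real.exp δ) / U t)) atTop (nhds (δ * γ)) := by
    have := (Real.continuousAt_log (Real.exp_ne_zero (δ * γ))).tendsto.comp h1
    simpa [Real.log_exp, Function.comp_def] using this
  have h3 : ∀ᶠ t in atTop, |Real.log (U (t * Real.exp δ) / U t) - δ * γ| < η := by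
    have := Metric.tendsto_nhds.mp h2 η hη
    simpa [Real.dist_eq] using this
  obtain ⟨T, hT⟩ := eventually_atTop.mp (h3.and hU1)
  refine ⟨max T 1, lt_of_lt_of_le one_pos (le_max_right _ _), ?_⟩
  set y₀ : ℝ := max T 1 with hy₀
  have hexp_ge : ∀ s : ℝ, y₀ ≤ s → T ≤ Real.exp s := by
    intro s hs
    have hTs : T ≤ s := le_trans (le_max_left _ _) hs
    nlinarith [Real.add_one_le_exp s]
  have hUpos : ∀ s : ℝ, y₀ ≤ s → 1 < U (Real.exp s) := fun s hs => (hT _ (hexp_ge s hs)).2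
  have hstep : ∀ s : ℝ, y₀ ≤ s →
      |Real.log (U (Real.exp (s + δ))) - Real.log (U (Real.exp s)) - δ * γ| ≤ η := by
    intro s hs
    have ht := hT _ (hexp_ge s hs)
    have hU : 1 < U (Real.exp s) := ht.2
    have hU' : 1 < U (Real.exp s * Real.exp δ) := by
      refine lt_of_lt_of_le hU (hmono ?_)
      nlinarith [Real.exp_pos s, Real.one_le_exp (le_of_lt hδ)]
    have hlog : Real.log (U (Real.exp s * Real.exp δ) / U (Real.exp s)) =
        Real.log (U (Real.exp s * Real.exp δ)) - Real.log (U (Real.exp s)) :=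
      Real.log_div (by linarith) (by linarith)
    have h := ht.1
    rw [hlog] at h
    rw [Real.exp_add]
    exact le_of_lt h
  have hgmono : ∀ a b : ℝ, y₀ ≤ a → a ≤ b →
      Real.log (U (Real.exp a)) ≤ Real.log (U (Real.exp b)) := by
    intro a b ha hab
    exact Real.log_le_log (lt_trans one_pos (hUpos a ha))
      (hmono (Real.exp_le_exp.mpr hab))
  -- chained bound by induction
  have hchain : ∀ n : ℕ, ∀ s : ℝ, y₀ ≤ s →
      (n : ℝ) * (δ * γ - η) ≤
        Real.log (U (Real.exp (s + n * δ))) - Real.log (U (Real.exp s)) ∧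
      Real.log (U (Real.exp (s + n * δ))) - Real.log (U (Real.exp s)) ≤
        (n : ℝ) * (δ * γ + η) := by
    intro n
    induction n with
    | zero => intro s hs; simp
    | succ n ih =>
      intro s hs
      have hs' : y₀ ≤ s + n * δ := le_trans hs (le_add_of_nonneg_right (by positivity))
      obtain ⟨ih1, ih2⟩ := ih s hs
      have hst := hstep (s + n * δ) hs'
      rw [abs_le] at hst
      have heq : s + (n + 1 : ℕ) * δ = (s + n * δ) + δ := by push_cast; ring
      rw [heq]
      push_cast
      constructor <;> nlinarith [hst.1, hst.2]
  -- final argument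
  intro y hy l hl
  have hy1 : (1 : ℝ) ≤ y := le_trans (le_max_right _ _) hy
  set h : ℝ := y * (l - 1) with hhdef
  have hh : 0 ≤ h := by
    have : 0 ≤ l - 1 := by linarith
    positivity
  set n : ℕ := ⌊h / δ⌋₊ with hndef
  have hn1 : (n : ℝ) * δ ≤ h := by
    have := Nat.floor_le (div_nonneg hh hδ.le)
    calc (n : ℝ) * δ ≤ (h / δ) * δ := by nlinarith
    _ = h := by field_simp
  have hn2 : h < ((n : ℝ) + 1) * δ := by
    have := Nat.lt_floor_add_one (h / δ)
    calc h = (h / δ) * δ := by field_simp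
    _ < ((n : ℝ) + 1) * δ := by nlinarith
  have hyl : y * l = y + h := by rw [hhdef]; ring
  have hN0 : (0 : ℝ) ≤ (n : ℝ) := Nat.cast_nonneg n
  have hlow : (n : ℝ) * (δ * γ - η) ≤
      Real.log (U (Real.exp (y * l))) - Real.log (U (Real.exp y)) := by
    have hc := (hchain n y hy).1
    have hm : Real.log (U (Real.exp (y + n * δ))) ≤ Real.log (U (Real.exp (y * l))) := by
      apply hgmono _ _ (le_trans hy (le_add_of_nonneg_right (by positivity)))
      rw [hyl]; linarith
    linarith
  have hup : Real.log (U (Real.exp (y * l))) - Real.log (U (Real.exp y)) ≤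
      ((n : ℝ) + 1) * (δ * γ + η) := by
    have hc := (hchain (n + 1) y hy).2
    push_cast at hc
    have hm : Real.log (U (Real.exp (y * l))) ≤
        Real.log (U (Real.exp (y + ((n : ℝ) + 1) * δ))) := by
      apply hgmono _ _ (le_trans hy (by rw [hyl]; linarith))
      rw [hyl]; linarith
    linarith
  have hB : (n : ℝ) * η ≤ h * (ε / 2) := by
    rw [hηdef]
    calc (n : ℝ) * (ε * δ / 2) = (ε / 2) * ((n : ℝ) * δ) := by ring
    _ ≤ (ε / 2) * h := mul_le_mul_of_nonneg_left hn1 (by positivity)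
    _ = h * (ε / 2) := by ring
  constructor
  · refine le_trans ?_ hlow
    have hA : (h - δ) * γ ≤ (n : ℝ) * δ * γ :=
      mul_le_mul_of_nonneg_right (by linarith) hγ.le
    exact stmt15_aux_low h δ γ ε η (n : ℝ) hh hε hδγ hA hB
  · refine le_trans hup ?_
    have hA : (n : ℝ) * δ * γ ≤ h * γ :=
      mul_le_mul_of_nonneg_right hn1 hγ.le
    exact stmt15_aux_up h δ γ ε η (n : ℝ) hh hε hδγ hηdef hδhalf hA hB
end

section
/- Let U be nondecreasing with U(t) → ∞, U ∈ ERV₀(w) (i.e., (U(tλ)−U(t))/w(t) → log λ for all λ > 0, w positive), and assume the GP extrapolation property: for all τ ≥ 1, [U(t) + w(t)·log(t^{τ−1}) − U(t^τ)]/U(t) → 0 as t → ∞ (penultimate GP approximation converges relative to U(t)). Then w(t^λ)/w(t) = 1 + o(max(U(t)/(w(t)log t), 1)) as t → ∞, for every λ ≥ 1. -/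
open Filter Real

theorem stmt16 (U w : ℝ → ℝ)
    (hmono : Monotone U)
    (hinf : Tendsto U atTop atTop)
    (hwpos : ∀ t, 0 < w t)
    (hERV0 : ∀ l : ℝ, 0 < l →
      Tendsto (fun t => (U (t * l) - U t) / w t) atTop (nhds (Real.log l)))
    (hGP : ∀ τ : ℝ, 1 ≤ τ →
      Tendsto
        (fun t => (U t + w t * Real.log (t ^ (τ - 1)) - U (t ^ τ)) / U t)
        atTop (nhds 0)) :
    ∀ l : ℝ, 1 ≤ l →
      Tendsto
        (fun t => (w (t ^ l) / w t - 1) / max (U t / (w t * Real.log t)) 1)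
        atTop (nhds 0) := by
  intro l hl
  have hl0 : (0:ℝ) < l := lt_of_lt_of_le one_pos hl
  set r : ℝ → ℝ → ℝ :=
    fun τ t => (U t + w t * Real.log (t ^ (τ - 1)) - U (t ^ τ)) / U t with hr
  have h1 : Tendsto (fun t => r l t) atTop (nhds 0) := hGP l hl
  have h2 : Tendsto (fun t => r (2*l) t) atTop (nhds 0) := hGP (2*l) (by linarith)
  have h3 : Tendsto (fun t => r 2 (t ^ l)) atTop (nhds 0) :=
    (hGP 2 one_le_two).comp (tendsto_rpow_atTop hl0)
  have hg : Tendsto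
      (fun t => (|r l t| + |r (2*l) t| + (l+1) * |r 2 (t ^ l)|) / l) atTop (nhds 0) := by
    have := ((h1.abs.add h2.abs).add (h3.abs.const_mul (l+1))).div_const l
    simpa using this
  apply squeeze_zero_norm' _ hg
  have hU : ∀ᶠ t : ℝ in atTop, 0 < U t := hinf.eventually_gt_atTop 0
  have hlt1 : ∀ᶠ t : ℝ in atTop, r l t < 1 :=
    h1.eventually_lt_const one_pos
  have hgt1 : ∀ᶠ t : ℝ in atTop, (-1:ℝ) < r l t :=
    h1.eventually_const_lt (by norm_num)
  filter_upwards [eventually_gt_atTop 1, hU, hlt1, hgt1] with t ht1 hUt hlt hgt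
  have tpos : (0:ℝ) < t := lt_trans one_pos ht1
  have logpos : 0 < Real.log t := Real.log_pos ht1
  have wp : 0 < w t := hwpos t
  have wlp : 0 < w (t ^ l) := hwpos _
  have hts : t ≤ t ^ l := by
    calc t = t ^ (1:ℝ) := (Real.rpow_one t).symm
    _ ≤ t ^ l := Real.rpow_le_rpow_of_exponent_le ht1.le hl
  have hac : U t ≤ U (t ^ l) := hmono hts
  have hcpos : 0 < U (t ^ l) := lt_of_lt_of_le hUt hac
  have hrabs : |r l t| ≤ 1 := abs_le.2 ⟨hgt.le, hlt.le⟩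
  -- the three GP equations
  have e1 : U t * r l t = U t + (l-1)*(w t * Real.log t) - U (t ^ l) := by
    simp only [hr]
    rw [mul_comm, div_mul_cancel₀ _ hUt.ne', Real.log_rpow tpos]
    ring
  have e2 : U t * r (2*l) t = U t + (2*l-1)*(w t * Real.log t) - U (t ^ (2*l)) := by
    simp only [hr]
    rw [mul_comm, div_mul_cancel₀ _ hUt.ne', Real.log_rpow tpos]
    ring
  have hpow : ((t:ℝ) ^ l) ^ (2:ℝ) = t ^ (2*l) := by
    rw [← Real.rpow_mul tpos.le, mul_comm]
  have hpow1 : ((t:ℝ) ^ l) ^ (2-1:ℝ) = t ^ l := by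
    norm_num
  have e3 : U (t ^ l) * r 2 (t ^ l)
      = U (t ^ l) + w (t ^ l) * (l * Real.log t) - U (t ^ (2*l)) := by
    simp only [hr]
    rw [mul_comm, div_mul_cancel₀ _ hcpos.ne', hpow1, hpow, Real.log_rpow tpos]
  have key : (w (t ^ l) - w t) * (l * Real.log t)
      = U t * (r l t - r (2*l) t) + U (t ^ l) * r 2 (t ^ l) := by
    linear_combination e2 - e1 - e3
  -- denominator rewriting
  have hbpos : (0:ℝ) < w t * Real.log t := by positivity
  have hMpos : (0:ℝ) < max (U t) (w t * Real.log t) := lt_max_of_lt_left hUt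
  have hmax : max (U t / (w t * Real.log t)) 1
      = max (U t) (w t * Real.log t) / (w t * Real.log t) := by
    rw [show (1:ℝ) = (w t * Real.log t)/(w t * Real.log t) from (div_self hbpos.ne').symm,
      max_div_div_right hbpos.le]
  have hEq : (w (t ^ l) / w t - 1) / max (U t / (w t * Real.log t)) 1
      = (U t * (r l t - r (2*l) t) + U (t ^ l) * r 2 (t ^ l))
        / (l * max (U t) (w t * Real.log t)) := by
    rw [hmax, ← key]
    field_simp
  rw [hEq, Real.norm_eq_abs, abs_div, abs_of_pos (by positivity : (0:ℝ) < l * max (U t) (w t * Real.log t))]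
  rw [div_le_div_iff₀ (by positivity) hl0]
  have haM : U t ≤ max (U t) (w t * Real.log t) := le_max_left _ _
  have hbM : w t * Real.log t ≤ max (U t) (w t * Real.log t) := le_max_right _ _
  have hcle : U (t ^ l) ≤ (l+1) * max (U t) (w t * Real.log t) := by
    have p1 : U t * (-|r l t|) ≤ U t * r l t :=
      mul_le_mul_of_nonneg_left (neg_abs_le _) hUt.le
    have p2 : U t * |r l t| ≤ U t * 1 := mul_le_mul_of_nonneg_left hrabs hUt.le
    have p3 : (l-1) * (w t * Real.log t) ≤ (l-1) * max (U t) (w t * Real.log t) :=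
      mul_le_mul_of_nonneg_left hbM (by linarith)
    nlinarith [e1]
  have habs : |U t * (r l t - r (2*l) t) + U (t ^ l) * r 2 (t ^ l)|
      ≤ U t * |r l t| + U t * |r (2*l) t| + U (t ^ l) * |r 2 (t ^ l)| := by
    calc |U t * (r l t - r (2*l) t) + U (t ^ l) * r 2 (t ^ l)|
        ≤ |U t * (r l t - r (2*l) t)| + |U (t ^ l) * r 2 (t ^ l)| := abs_add_le _ _
      _ = U t * |r l t - r (2*l) t| + U (t ^ l) * |r 2 (t ^ l)| := by
          rw [abs_mul, abs_mul, abs_of_pos hUt, abs_of_pos hcpos]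
      _ ≤ U t * (|r l t| + |r (2*l) t|) + U (t ^ l) * |r 2 (t ^ l)| := by
          gcongr
          exact abs_sub _ _
      _ = U t * |r l t| + U t * |r (2*l) t| + U (t ^ l) * |r 2 (t ^ l)| := by ring
  have q1 : U t * |r l t| ≤ max (U t) (w t * Real.log t) * |r l t| :=
    mul_le_mul_of_nonneg_right haM (abs_nonneg _)
  have q2 : U t * |r (2*l) t| ≤ max (U t) (w t * Real.log t) * |r (2*l) t| :=
    mul_le_mul_of_nonneg_right haM (abs_nonneg _)
  have q3 : U (t ^ l) * |r 2 (t ^ l)|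
      ≤ (l+1) * max (U t) (w t * Real.log t) * |r 2 (t ^ l)| :=
    mul_le_mul_of_nonneg_right hcle (abs_nonneg _)
  have hNle : |U t * (r l t - r (2*l) t) + U (t ^ l) * r 2 (t ^ l)|
      ≤ max (U t) (w t * Real.log t) * |r l t| + max (U t) (w t * Real.log t) * |r (2*l) t|
        + (l+1) * max (U t) (w t * Real.log t) * |r 2 (t ^ l)| :=
    habs.trans (by linarith)
  calc |U t * (r l t - r (2*l) t) + U (t ^ l) * r 2 (t ^ l)| * l
      ≤ (max (U t) (w t * Real.log t) * |r l t| + max (U t) (w t * Real.log t) * |r (2*l) t|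
        + (l+1) * max (U t) (w t * Real.log t) * |r 2 (t ^ l)|) * l :=
        mul_le_mul_of_nonneg_right hNle hl0.le
    _ = (|r l t| + |r (2*l) t| + (l+1) * |r 2 (t ^ l)|) * (l * max (U t) (w t * Real.log t)) := by
        ring
end

section
/- Let U be nondecreasing with U(t) → ∞ and U ∈ ERV₀(w), and suppose for all τ ≥ 1 that [U(t)+(τ−1)w(t)log t − U(t^τ)]/U(t) → 0 as t → ∞. Then exactly one of the following holds: (i) U(t^λ)/U(t) → λ for all λ > 0 (i.e., q := U∘exp is regularly varying with index 1), or (ii) U(t^λ)/U(t) → 1 for all λ > 0 (i.e., q is slowly varying). -/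
open Filter Real

private lemma aux_delta {a b x y ε : ℝ} (ha : 0 ≤ a) (hε : 0 < ε) (hε1 : ε ≤ 1/10)
    (hx : |x - (1 + a)| < ε) (hxy : |x * y - (1 + 3 * a)| < ε) (hyb : |y - (1 + b)| < ε) :
    |b - 2 * a / (1 + a)| < 10 * ε := by
  have h1a : (0:ℝ) < 1 + a := by linarith
  obtain ⟨hx1, hx2⟩ := abs_lt.mp hx
  obtain ⟨hv1, hv2⟩ := abs_lt.mp hxy
  obtain ⟨hs1, hs2⟩ := abs_lt.mp hyb
  have hx0 : 0 < x := by linarith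
  have hy0 : 0 < y := by
    rcases le_or_gt y 0 with h | h
    · nlinarith [mul_nonneg hx0.le (neg_nonneg.mpr h)]
    · exact h
  have hy4 : y ≤ 7/2 := by
    nlinarith [mul_le_mul_of_nonneg_left (show 1 + a - ε ≤ x by linarith) hy0.le]
  have hb3 : b ≤ 3 := by linarith
  have hbm : -1 - ε ≤ b := by linarith
  have key : |b * (1 + a) - 2 * a| < 10 * ε * (1 + a) := by
    have hxs1 : x * (y - (1 + b)) < x * ε := mul_lt_mul_of_pos_left hs2 hx0
    have hxs2 : -(x * ε) < x * (y - (1 + b)) := by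
      have := mul_lt_mul_of_pos_left hs1 hx0
      nlinarith
    have hxε : x * ε ≤ (1 + a + ε) * ε := by nlinarith
    have hub1 : (x - (1 + a)) * b < 4 * ε := by
      rcases le_or_gt 0 b with hb | hb
      · nlinarith
      · nlinarith
    have hub2 : -(4 * ε) < (x - (1 + a)) * b := by
      rcases le_or_gt 0 b with hb | hb
      · nlinarith
      · nlinarith
    have hiden : b * (1 + a) - 2 * a =
        (x * y - (1 + 3 * a)) - (x - (1 + a)) - x * (y - (1 + b)) - (x - (1 + a)) * b := by
      ring
    have hε2 : ε * ε ≤ ε := by nlinarith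
    have haε : 0 ≤ ε * a := mul_nonneg hε.le ha
    rw [abs_lt, hiden]
    constructor <;> linarith
  have hrw : b - 2 * a / (1 + a) = (b * (1 + a) - 2 * a) / (1 + a) := by
    field_simp
  rw [hrw, abs_div, abs_of_pos h1a, div_lt_iff₀ h1a]
  linarith [key]

set_option maxHeartbeats 1600000 in
theorem stmt17 (U w : ℝ → ℝ)
    (hmono : Monotone U)
    (hinf : Tendsto U atTop atTop)
    (hwpos : ∀ t, 0 < w t)
    (hERV0 : ∀ l : ℝ, 0 < l →
      Tendsto (fun t => (U (t * l) - U t) / w t) atTop (nhds (Real.log l)))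
    (hGP : ∀ τ : ℝ, 1 ≤ τ →
      Tendsto
        (fun t => (U t + (τ - 1) * (w t * Real.log t) - U (t ^ τ)) / U t)
        atTop (nhds 0)) :
    Xor'
      (∀ l : ℝ, 0 < l → Tendsto (fun t => U (t ^ l) / U t) atTop (nhds l))
      (∀ l : ℝ, 0 < l → Tendsto (fun t => U (t ^ l) / U t) atTop (nhds 1)) := by
  classical
  set A : ℝ → ℝ := fun t => w t * Real.log t / U t with hAdef
  have hU1 : ∀ᶠ t : ℝ in atTop, 1 ≤ U t := hinf.eventually_ge_atTop 1
  have hbasic : ∀ᶠ t : ℝ in atTop, 2 ≤ t ∧ 1 ≤ U t ∧ 0 < A t := by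
    filter_upwards [hU1, eventually_ge_atTop (2:ℝ)] with t h1 h2
    have hlog : 0 < Real.log t := Real.log_pos (by linarith)
    exact ⟨h2, h1, div_pos (mul_pos (hwpos t) hlog) (by linarith)⟩
  have hE : ∀ τ : ℝ, 1 ≤ τ →
      Tendsto (fun t => U (t ^ τ) / U t - (1 + (τ - 1) * A t)) atTop (nhds 0) := by
    intro τ hτ
    have h := (hGP τ hτ).neg
    rw [neg_zero] at h
    refine Tendsto.congr' ?_ h
    filter_upwards [hU1] with t h1
    have h0 : U t ≠ 0 := by linarith
    simp only [hAdef]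
    field_simp
    ring
  have hEε : ∀ τ : ℝ, 1 ≤ τ → ∀ ε : ℝ, 0 < ε →
      ∀ᶠ t : ℝ in atTop, |U (t ^ τ) / U t - (1 + (τ - 1) * A t)| < ε := by
    intro τ hτ ε hε
    have := Metric.tendsto_nhds.mp (hE τ hτ) ε hε
    simpa [Real.dist_eq] using this
  have h2T : Tendsto (fun t : ℝ => t ^ (2:ℝ)) atTop atTop :=
    tendsto_rpow_atTop (by norm_num)
  -- the key recursion error bound
  have hδ : ∀ ε : ℝ, 0 < ε → ∀ᶠ t : ℝ in atTop,
      |A (t ^ (2:ℝ)) - 2 * A t / (1 + A t)| < ε := by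
    intro ε hε
    set ε' := min (ε/10) (1/10) with hε'def
    have hε'0 : 0 < ε' := lt_min (by linarith) (by norm_num)
    filter_upwards [hbasic, hEε 2 one_le_two _ hε'0, hEε 4 (by norm_num) _ hε'0,
      h2T.eventually (hEε 2 one_le_two _ hε'0), eventually_ge_atTop (0:ℝ)]
      with t ht h2 h4 h2' ht0
    obtain ⟨ht2, hU, hA0⟩ := ht
    have hUne : U t ≠ 0 := by linarith
    have htt : t ≤ t ^ (2:ℝ) := by
      nth_rewrite 1 [← Real.rpow_one t]
      exact Real.rpow_le_rpow_of_exponent_le (by linarith) one_le_two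
    have hU2 : 1 ≤ U (t ^ (2:ℝ)) := le_trans hU (hmono htt)
    have hU2ne : U (t ^ (2:ℝ)) ≠ 0 := by linarith
    have hexp : (t ^ (2:ℝ)) ^ (2:ℝ) = t ^ (4:ℝ) := by
      rw [← Real.rpow_mul ht0]
      norm_num
    have hmul : U (t ^ (2:ℝ)) / U t * (U ((t ^ (2:ℝ)) ^ (2:ℝ)) / U (t ^ (2:ℝ)))
        = U (t ^ (4:ℝ)) / U t := by
      rw [hexp, mul_comm, div_mul_div_comm, mul_comm (U (t ^ (4:ℝ))) (U (t ^ (2:ℝ))),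
        mul_div_mul_left _ _ hU2ne]
    have h2c : |U (t ^ (2:ℝ)) / U t - (1 + A t)| < ε' := by
      have he : (1 + ((2:ℝ) - 1) * A t) = 1 + A t := by norm_num
      rwa [he] at h2
    have h4c : |U (t ^ (4:ℝ)) / U t - (1 + 3 * A t)| < ε' := by
      have he : (1 + ((4:ℝ) - 1) * A t) = 1 + 3 * A t := by norm_num
      rwa [he] at h4
    have h2'c : |U ((t ^ (2:ℝ)) ^ (2:ℝ)) / U (t ^ (2:ℝ)) - (1 + A (t ^ (2:ℝ)))| < ε' := by
      have he : (1 + ((2:ℝ) - 1) * A (t ^ (2:ℝ))) = 1 + A (t ^ (2:ℝ)) := by norm_num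
      rwa [he] at h2'
    rw [← hmul] at h4c
    have haux := aux_delta (a := A t) (b := A (t ^ (2:ℝ))) hA0.le hε'0
      (min_le_right _ _) h2c h4c h2'c
    calc |A (t ^ (2:ℝ)) - 2 * A t / (1 + A t)| < 10 * ε' := haux
      _ ≤ ε := by
          have := min_le_left (ε/10) (1/10)
          rw [hε'def]
          linarith
  have hsq : ∀ T u : ℝ, 2 ≤ T → T ^ (2:ℝ) ≤ u →
      T ≤ u ^ ((1:ℝ)/2) ∧ (u ^ ((1:ℝ)/2)) ^ (2:ℝ) = u := by
    intro T u hT hu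
    have hT0 : (0:ℝ) ≤ T := by linarith
    have hu0 : (0:ℝ) ≤ u := le_trans (Real.rpow_nonneg hT0 _) hu
    constructor
    · have h := Real.rpow_le_rpow (Real.rpow_nonneg hT0 _) hu (by norm_num : (0:ℝ) ≤ 1/2)
      rwa [← Real.rpow_mul hT0, show (2:ℝ) * (1/2) = 1 by norm_num, Real.rpow_one] at h
    · rw [← Real.rpow_mul hu0, show (1:ℝ)/2 * 2 = 1 by norm_num, Real.rpow_one]
  have hA3 : ∀ᶠ u : ℝ in atTop, A u ≤ 3 := by
    obtain ⟨T, hT⟩ := eventually_atTop.mp ((hδ (1/2) (by norm_num)).and hbasic)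
    refine eventually_atTop.mpr ⟨(max T 2) ^ (2:ℝ), fun u hu => ?_⟩
    obtain ⟨hs1, hs2⟩ := hsq (max T 2) u (le_max_right _ _) hu
    obtain ⟨hd, _, _, hA0⟩ := hT _ (le_trans (le_max_left _ _) hs1)
    have h2a : 2 * A (u ^ ((1:ℝ)/2)) / (1 + A (u ^ ((1:ℝ)/2))) ≤ 2 := by
      rw [div_le_iff₀ (by linarith)]
      linarith
    have hlt := (abs_lt.mp hd).2
    rw [← hs2]
    linarith
  -- dichotomy
  have dico : Tendsto A atTop (nhds 0) ∨ Tendsto A atTop (nhds 1) := by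
    by_cases hQ : ∀ T : ℝ, ∃ t, T ≤ t ∧ 1/4 ≤ A t
    · right
      obtain ⟨T₀, hT₀⟩ := eventually_atTop.mp
        (hbasic.and ((hδ (1/10) (by norm_num)).and ((hEε 2 one_le_two (1/1000) (by norm_num)).and
          ((hEε (3/2) (by norm_num) (1/1000) (by norm_num)).and
            ((hEε 3 (by norm_num) (1/1000) (by norm_num)).and hA3)))))
      -- interval lemma
      have hinterval : ∀ t u : ℝ, T₀ ≤ t → 1/4 ≤ A t → t ≤ u → u ≤ t ^ (2:ℝ) →
          1/10 ≤ A u := by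
        intro t u htT hAt htu hut2
        obtain ⟨⟨ht2, hUt, hAtpos⟩, -, hE2t, hE32t, hE3t, hAt3⟩ := hT₀ t htT
        have ht0 : (0:ℝ) ≤ t := by linarith
        have ht1 : (1:ℝ) ≤ t := by linarith
        have huT : T₀ ≤ u := le_trans htT htu
        obtain ⟨⟨hu2, hUu, hAupos⟩, -, hE2u, -, -, -⟩ := hT₀ u huT
        have hUune : U u ≠ 0 := by linarith
        have hUtne : U t ≠ 0 := by linarith
        have hUu0 : (0:ℝ) < U u := by linarith
        have hAulow := (abs_lt.mp hE2u).2
        have htt2 : t ≤ t ^ (2:ℝ) := by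
          nth_rewrite 1 [← Real.rpow_one t]
          exact Real.rpow_le_rpow_of_exponent_le ht1 one_le_two
        have hUt2 : (1:ℝ) ≤ U (t ^ (2:ℝ)) := le_trans hUt (hmono htt2)
        obtain ⟨hp1, hp2⟩ := abs_lt.mp hE2t
        rcases le_total u (t ^ ((3:ℝ)/2)) with hc | hc
        · -- u ≤ t^{3/2}
          have hm1 : U (t ^ (2:ℝ)) ≤ U (u ^ (2:ℝ)) :=
            hmono (Real.rpow_le_rpow ht0 htu (by norm_num))
          have hm2 : U u ≤ U (t ^ ((3:ℝ)/2)) := hmono hc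
          have htt32 : t ≤ t ^ ((3:ℝ)/2) := by
            nth_rewrite 1 [← Real.rpow_one t]
            exact Real.rpow_le_rpow_of_exponent_le ht1 (by norm_num)
          have hq1 : (1:ℝ) ≤ U (t ^ ((3:ℝ)/2)) := le_trans hUt (hmono htt32)
          have hq0 : (0:ℝ) < U (t ^ ((3:ℝ)/2)) := by linarith
          obtain ⟨hq1', hq2'⟩ := abs_lt.mp hE32t
          have hdiv : U (t ^ (2:ℝ)) / U (t ^ ((3:ℝ)/2)) ≤ U (u ^ (2:ℝ)) / U u :=
            div_le_div₀ (by linarith) hm1 hUu0 hm2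
          have hsplit : U (t ^ (2:ℝ)) / U (t ^ ((3:ℝ)/2))
              = (U (t ^ (2:ℝ)) / U t) / (U (t ^ ((3:ℝ)/2)) / U t) := by
            field_simp
          have hQpos : (0:ℝ) < U (t ^ ((3:ℝ)/2)) / U t := div_pos hq0 (by linarith)
          have hfrac : (1 + A t - 1/1000) / (1 + (3/2 - 1) * A t + 1/1000)
              ≤ (U (t ^ (2:ℝ)) / U t) / (U (t ^ ((3:ℝ)/2)) / U t) := by
            refine div_le_div₀ (by positivity) (by linarith) hQpos (by linarith)
          have hnum : (1101:ℝ)/1000 ≤ (1 + A t - 1/1000) / (1 + (3/2 - 1) * A t + 1/1000) := by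
            rw [le_div_iff₀ (by linarith)]
            linarith
          rw [hsplit] at hdiv
          linarith
        · -- t^{3/2} ≤ u
          have h32 : (t ^ ((3:ℝ)/2)) ^ (2:ℝ) = t ^ (3:ℝ) := by
            rw [← Real.rpow_mul ht0]
            norm_num
          have hm1 : U (t ^ (3:ℝ)) ≤ U (u ^ (2:ℝ)) := by
            rw [← h32]
            exact hmono (Real.rpow_le_rpow (Real.rpow_nonneg ht0 _) hc (by norm_num))
          have hm2 : U u ≤ U (t ^ (2:ℝ)) := hmono hut2
          have hq0 : (0:ℝ) < U (t ^ (2:ℝ)) := by linarith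
          obtain ⟨hq1', hq2'⟩ := abs_lt.mp hE3t
          have htt3 : t ≤ t ^ (3:ℝ) := by
            nth_rewrite 1 [← Real.rpow_one t]
            exact Real.rpow_le_rpow_of_exponent_le ht1 (by norm_num)
          have hUt3 : (1:ℝ) ≤ U (t ^ (3:ℝ)) := le_trans hUt (hmono htt3)
          have hdiv : U (t ^ (3:ℝ)) / U (t ^ (2:ℝ)) ≤ U (u ^ (2:ℝ)) / U u :=
            div_le_div₀ (by linarith) hm1 hUu0 hm2
          have hsplit : U (t ^ (3:ℝ)) / U (t ^ (2:ℝ))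
              = (U (t ^ (3:ℝ)) / U t) / (U (t ^ (2:ℝ)) / U t) := by
            field_simp
          have hQpos : (0:ℝ) < U (t ^ (2:ℝ)) / U t := div_pos hq0 (by linarith)
          have hfrac : (1 + (3 - 1) * A t - 1/1000) / (1 + A t + 1/1000)
              ≤ (U (t ^ (3:ℝ)) / U t) / (U (t ^ (2:ℝ)) / U t) := by
            refine div_le_div₀ (by positivity) (by linarith) hQpos (by linarith)
          have hnum : (1101:ℝ)/1000 ≤ (1 + (3 - 1) * A t - 1/1000) / (1 + A t + 1/1000) := by
            rw [le_div_iff₀ (by linarith)]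
            linarith
          rw [hsplit] at hdiv
          linarith
      -- starting point
      obtain ⟨t₀, ht₀T, ht₀A⟩ := hQ T₀
      obtain ⟨⟨ht₀2, -, -⟩, -, -, -, -, -⟩ := hT₀ t₀ ht₀T
      have ht₀0 : (0:ℝ) ≤ t₀ := by linarith
      have ht₀1 : (1:ℝ) ≤ t₀ := by linarith
      have hs_succ : ∀ n : ℕ, (t₀ ^ ((2:ℝ)^n)) ^ (2:ℝ) = t₀ ^ ((2:ℝ)^(n+1)) := fun n => by
        rw [← Real.rpow_mul ht₀0, ← pow_succ]
      have hsge : ∀ n : ℕ, t₀ ≤ t₀ ^ ((2:ℝ)^n) := fun n => by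
        nth_rewrite 1 [← Real.rpow_one t₀]
        exact Real.rpow_le_rpow_of_exponent_le ht₀1 (one_le_pow₀ one_le_two)
      have h14 : ∀ n : ℕ, 1/4 ≤ A (t₀ ^ ((2:ℝ)^n)) := by
        intro n
        induction n with
        | zero => simpa using ht₀A
        | succ n ih =>
          obtain ⟨⟨-, -, hApos⟩, hd, -, -, -, -⟩ := hT₀ _ (le_trans ht₀T (hsge n))
          have hdd := (abs_lt.mp hd).1
          have hfrac : (2:ℝ)/5 ≤ 2 * A (t₀ ^ ((2:ℝ)^n)) / (1 + A (t₀ ^ ((2:ℝ)^n))) := by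
            rw [le_div_iff₀ (by linarith)]
            linarith
          rw [← hs_succ n]
          linarith
      -- covering
      have hcover : ∀ u, t₀ ≤ u → ∃ n : ℕ, t₀ ^ ((2:ℝ)^n) ≤ u ∧ u ≤ t₀ ^ ((2:ℝ)^(n+1)) := by
        intro u hu
        have hex : ∃ m : ℕ, u < t₀ ^ ((2:ℝ)^m) := by
          obtain ⟨m, hm⟩ := exists_nat_gt u
          refine ⟨m, lt_of_lt_of_le hm ?_⟩
          have h1 : ((m:ℝ)) ≤ (2:ℝ)^m := by
            exact_mod_cast (Nat.lt_two_pow_self (n := m)).le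
          have h2 : ((2:ℝ)^m : ℝ) = (2:ℝ) ^ ((m:ℕ):ℝ) := (Real.rpow_natCast 2 m).symm
          have h3 : (2:ℝ) ^ ((m:ℕ):ℝ) ≤ (2:ℝ) ^ ((2:ℝ)^m) :=
            Real.rpow_le_rpow_of_exponent_le one_le_two h1
          have h4 : (2:ℝ) ^ ((2:ℝ)^m) ≤ t₀ ^ ((2:ℝ)^m) :=
            Real.rpow_le_rpow (by norm_num) (by linarith) (by positivity)
          have h5 : (m:ℝ) ≤ (2:ℝ) ^ ((m:ℕ):ℝ) := by rw [← h2]; exact h1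
          linarith
        have hfind := Nat.find_spec hex
        rcases hnn : Nat.find hex with _ | n
        · exfalso
          rw [hnn] at hfind
          have he0 : t₀ ^ ((2:ℝ)^(0:ℕ)) = t₀ := by
            norm_num
          rw [he0] at hfind
          linarith
        · refine ⟨n, ?_, ?_⟩
          · have hmin := Nat.find_min hex (m := n) (by omega)
            push_neg at hmin
            exact hmin
          · rw [hnn] at hfind
            exact hfind.le
      -- uniform lower bound
      have hlow : ∀ u, t₀ ≤ u → 1/10 ≤ A u ∧ A u ≤ 3 := by
        intro u hu
        have huT₀ : T₀ ≤ u := le_trans ht₀T hu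
        refine ⟨?_, (hT₀ u huT₀).2.2.2.2.2⟩
        obtain ⟨n, hn1, hn2⟩ := hcover u hu
        refine hinterval (t₀ ^ ((2:ℝ)^n)) u (le_trans ht₀T (hsge n)) (h14 n) hn1 ?_
        rw [hs_succ n]
        exact hn2
      -- B phase
      set B : ℝ → ℝ := fun t => (A t - 1) / A t with hBdef
      have hBb : ∀ u, t₀ ≤ u → |B u| ≤ 9 := by
        intro u hu
        obtain ⟨h110, h3⟩ := hlow u hu
        simp only [hBdef]
        rw [abs_le]
        constructor
        · rw [le_div_iff₀ (by linarith)]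
          linarith
        · rw [div_le_iff₀ (by linarith)]
          linarith
      have hB2 : ∀ θ : ℝ, 0 < θ → ∀ᶠ t : ℝ in atTop, |B (t ^ (2:ℝ)) - B t / 2| ≤ θ := by
        intro θ hθ
        have hθ' : 0 < θ/200 := by linarith
        filter_upwards [hδ (θ/200) hθ', eventually_ge_atTop (max t₀ 2)] with t hd ht
        have ht₀t : t₀ ≤ t := le_trans (le_max_left _ _) ht
        have ht2 : (2:ℝ) ≤ t := le_trans (le_max_right _ _) ht
        have htt : t ≤ t ^ (2:ℝ) := by
          nth_rewrite 1 [← Real.rpow_one t]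
          exact Real.rpow_le_rpow_of_exponent_le (by linarith) one_le_two
        obtain ⟨ha1, ha3⟩ := hlow t ht₀t
        obtain ⟨hb1, hb3⟩ := hlow (t ^ (2:ℝ)) (le_trans ht₀t htt)
        have hane : A t ≠ 0 := by linarith
        have hbne : A (t ^ (2:ℝ)) ≠ 0 := by linarith
        have h1ane : (1 + A t) ≠ 0 := by linarith
        have gen : ∀ a b : ℝ, a ≠ 0 → b ≠ 0 → 1 + a ≠ 0 →
            (b - 1)/b - ((a-1)/a)/2 = (b - 2*a/(1+a)) * ((1+a)/(2*a*b)) := by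
          intro a b ha hb h1a
          field_simp
          ring
        have hiden : B (t ^ (2:ℝ)) - B t / 2
            = (A (t ^ (2:ℝ)) - 2 * A t / (1 + A t)) * ((1 + A t) / (2 * A t * A (t ^ (2:ℝ)))) := by
          simp only [hBdef]
          exact gen (A t) (A (t ^ (2:ℝ))) hane hbne h1ane
        rw [hiden, abs_mul]
        have hprod : (1:ℝ)/100 ≤ A t * A (t ^ (2:ℝ)) := by nlinarith
        have hfac : |(1 + A t) / (2 * A t * A (t ^ (2:ℝ)))| ≤ 200 := by
          rw [abs_div, abs_of_pos (by linarith : (0:ℝ) < 1 + A t),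
            abs_of_pos (by nlinarith : (0:ℝ) < 2 * A t * A (t ^ (2:ℝ)))]
          rw [div_le_iff₀ (by nlinarith)]
          nlinarith
        calc |A (t ^ (2:ℝ)) - 2 * A t / (1 + A t)| * |(1 + A t) / (2 * A t * A (t ^ (2:ℝ)))|
            ≤ (θ/200) * 200 := mul_le_mul hd.le hfac (abs_nonneg _) hθ'.le
          _ = θ := by ring
      have hB0 : Tendsto B atTop (nhds 0) := by
        rw [Metric.tendsto_nhds]
        intro θ hθ
        set ε' := min (θ/4) 1 with hε'def
        have hε'0 : 0 < ε' := lt_min (by linarith) one_pos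
        obtain ⟨T₁', hT₁'⟩ := eventually_atTop.mp (hB2 ε' hε'0)
        set T₁ := max T₁' (max t₀ 2) with hT₁def
        have hT₁t₀ : t₀ ≤ T₁ := le_trans (le_max_left _ _) (le_max_right _ _)
        have hT₁2 : (2:ℝ) ≤ T₁ := le_trans (le_max_right t₀ 2) (le_max_right T₁' _)
        have hT₁'le : T₁' ≤ T₁ := le_max_left _ _
        have hT₁1 : (1:ℝ) ≤ T₁ := by linarith
        have hTn2 : ∀ n : ℕ, (2:ℝ) ≤ T₁ ^ ((2:ℝ)^n) := by
          intro n
          refine le_trans hT₁2 ?_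
          nth_rewrite 1 [← Real.rpow_one T₁]
          exact Real.rpow_le_rpow_of_exponent_le hT₁1 (one_le_pow₀ one_le_two)
        have claim : ∀ n : ℕ, ∀ u : ℝ, T₁ ^ ((2:ℝ)^n) ≤ u → |B u| ≤ 9 / 2^n + 2*ε' := by
          intro n
          induction n with
          | zero =>
            intro u hu
            have hT₁u : T₁ ≤ u := by simpa using hu
            have h9 := hBb u (le_trans hT₁t₀ hT₁u)
            have : (9:ℝ) / 2^(0:ℕ) + 2*ε' = 9 + 2*ε' := by norm_num
            rw [this]
            linarith
          | succ n ih =>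
            intro u hu
            have hsucc : (T₁ ^ ((2:ℝ)^n)) ^ (2:ℝ) = T₁ ^ ((2:ℝ)^(n+1)) := by
              rw [← Real.rpow_mul (by linarith : (0:ℝ) ≤ T₁), ← pow_succ]
            have hu' : (T₁ ^ ((2:ℝ)^n)) ^ (2:ℝ) ≤ u := by rw [hsucc]; exact hu
            obtain ⟨hv1, hv2⟩ := hsq (T₁ ^ ((2:ℝ)^n)) u (hTn2 n) hu'
            have hvT₁ : T₁ ≤ u ^ ((1:ℝ)/2) := by
              refine le_trans ?_ hv1
              nth_rewrite 1 [← Real.rpow_one T₁]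
              exact Real.rpow_le_rpow_of_exponent_le hT₁1 (one_le_pow₀ one_le_two)
            have hrec := hT₁' (u ^ ((1:ℝ)/2)) (le_trans hT₁'le hvT₁)
            have hBv := ih (u ^ ((1:ℝ)/2)) hv1
            have habs : |B ((u ^ ((1:ℝ)/2)) ^ (2:ℝ))| ≤ |B (u ^ ((1:ℝ)/2))| / 2 + ε' := by
              have h := abs_add_le (B ((u ^ ((1:ℝ)/2)) ^ (2:ℝ)) - B (u ^ ((1:ℝ)/2))/2)
                (B (u ^ ((1:ℝ)/2))/2)
              rw [sub_add_cancel] at h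
              have h2 : |B (u ^ ((1:ℝ)/2)) / 2| = |B (u ^ ((1:ℝ)/2))| / 2 := by
                rw [abs_div]
                norm_num
              rw [h2] at h
              linarith
            rw [hv2] at habs
            have hhalf : |B (u ^ ((1:ℝ)/2))| / 2 ≤ (9 / 2^n + 2*ε') / 2 := by linarith
            calc |B u| ≤ (9 / 2^n + 2*ε') / 2 + ε' := by linarith
              _ = 9 / 2^(n+1) + 2*ε' := by rw [pow_succ]; ring
        obtain ⟨n, hn⟩ := pow_unbounded_of_one_lt (36/θ) (one_lt_two (α := ℝ))
        refine eventually_atTop.mpr ⟨T₁ ^ ((2:ℝ)^n), fun u hu => ?_⟩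
        have hcl := claim n u hu
        rw [Real.dist_eq, sub_zero]
        have h2n : (0:ℝ) < 2^n := by positivity
        have h9 : (9:ℝ)/2^n < θ/4 := by
          rw [div_lt_iff₀ h2n]
          rw [div_lt_iff₀ hθ] at hn
          nlinarith
        have hε'4 : ε' ≤ θ/4 := min_le_left _ _
        linarith
      have h1B : Tendsto (fun t => (1 - B t)⁻¹) atTop (nhds 1) := by
        have h1 : Tendsto (fun t => 1 - B t) atTop (nhds 1) := by
          simpa using ((tendsto_const_nhds : Tendsto (fun _ : ℝ => (1:ℝ)) atTop (nhds 1)).sub hB0)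
        have := h1.inv₀ (by norm_num)
        simpa using this
      refine Tendsto.congr' ?_ h1B
      filter_upwards [eventually_ge_atTop t₀] with u hu
      obtain ⟨h110, -⟩ := hlow u hu
      have hAune : A u ≠ 0 := by linarith
      simp only [hBdef]
      field_simp
      ring
    · left
      push_neg at hQ
      obtain ⟨T, hT⟩ := hQ
      rw [Metric.tendsto_nhds]
      intro θ hθ
      set ε' := min (θ/20) (1/100) with hε'def
      have hε'0 : 0 < ε' := lt_min (by linarith) (by norm_num)
      obtain ⟨T₂', hT₂⟩ := eventually_atTop.mp ((hδ ε' hε'0).and hbasic)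
      set T₂ := max T₂' (max T 2) with hT₂def
      have hTT₂ : T ≤ T₂ := le_trans (le_max_left T 2) (le_max_right T₂' _)
      have h2T₂ : (2:ℝ) ≤ T₂ := le_trans (le_max_right T 2) (le_max_right T₂' _)
      have hT₂'T₂ : T₂' ≤ T₂ := le_max_left _ _
      have key : ∀ t, T₂ ≤ t → A t < 10 * ε' := by
        intro t ht
        by_contra hcon
        push_neg at hcon
        have ht2 : (2:ℝ) ≤ t := le_trans h2T₂ ht
        have ht0 : (0:ℝ) ≤ t := by linarith
        have grow : ∀ n : ℕ, (3/2)^n * A t ≤ A (t ^ ((2:ℝ)^n)) ∧ T₂ ≤ t ^ ((2:ℝ)^n) := by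
          intro n
          induction n with
          | zero =>
            constructor
            · simp
            · simpa using ht
          | succ n ih =>
            obtain ⟨ih1, ih2⟩ := ih
            have hs2 : (t ^ ((2:ℝ)^n)) ^ (2:ℝ) = t ^ ((2:ℝ)^(n+1)) := by
              rw [← Real.rpow_mul ht0, ← pow_succ]
            obtain ⟨hd, hb2, hbU, hbA⟩ := hT₂ _ (le_trans hT₂'T₂ ih2)
            have h14 : A (t ^ ((2:ℝ)^n)) < 1/4 := hT _ (le_trans hTT₂ ih2)
            have hge : 10 * ε' ≤ A (t ^ ((2:ℝ)^n)) := by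
              have hpow1 : (1:ℝ) ≤ (3/2)^n := one_le_pow₀ (by norm_num)
              nlinarith
            have hgrow2 : (8/5) * A (t ^ ((2:ℝ)^n))
                ≤ 2 * A (t ^ ((2:ℝ)^n)) / (1 + A (t ^ ((2:ℝ)^n))) := by
              rw [le_div_iff₀ (by linarith)]
              nlinarith
            have hdd := (abs_lt.mp hd).1
            constructor
            · rw [← hs2]
              have step1 : (3/2)^(n+1) * A t = (3/2) * ((3/2)^n * A t) := by ring
              have step2 : (3/2) * ((3/2)^n * A t) ≤ (3/2) * A (t ^ ((2:ℝ)^n)) :=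
                mul_le_mul_of_nonneg_left ih1 (by norm_num)
              rw [step1]
              refine le_trans step2 ?_
              linarith
            · rw [← hs2]
              refine le_trans ih2 ?_
              nth_rewrite 1 [← Real.rpow_one (t ^ ((2:ℝ)^n))]
              exact Real.rpow_le_rpow_of_exponent_le (by linarith) one_le_two
        obtain ⟨n, hn⟩ := pow_unbounded_of_one_lt (1/(40 * ε')) (by norm_num : (1:ℝ) < 3/2)
        obtain ⟨g1, g2⟩ := grow n
        have hlt : A (t ^ ((2:ℝ)^n)) < 1/4 := hT _ (le_trans hTT₂ g2)
        have h40 : (0:ℝ) < 40 * ε' := by linarith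
        have hn' : (1:ℝ) < (3/2)^n * (40 * ε') := by
          rw [div_lt_iff₀ h40] at hn
          linarith
        have hmul2 : (3/2)^n * (10 * ε') ≤ (3/2)^n * A t :=
          mul_le_mul_of_nonneg_left hcon (pow_nonneg (by norm_num) n)
        nlinarith
      refine eventually_atTop.mpr ⟨T₂, fun t ht => ?_⟩
      have h1 := key t ht
      obtain ⟨-, -, -, hA0⟩ := hT₂ t (le_trans hT₂'T₂ ht)
      rw [Real.dist_eq, sub_zero, abs_of_pos hA0]
      have hm : ε' ≤ θ/20 := min_le_left _ _
      linarith
  -- endgame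
  have hbig : ∀ c : ℝ, Tendsto A atTop (nhds c) → ∀ v : ℝ, 1 ≤ v →
      Tendsto (fun t => U (t ^ v) / U t) atTop (nhds (1 + (v - 1) * c)) := by
    intro c hc v hv
    have h := (hE v hv).add
      ((tendsto_const_nhds : Tendsto (fun _ : ℝ => (1:ℝ)) atTop (nhds 1)).add
        (hc.const_mul (v - 1)))
    rw [zero_add] at h
    refine h.congr fun t => ?_
    ring
  have hall : ∀ c : ℝ, c = 0 ∨ c = 1 → Tendsto A atTop (nhds c) →
      ∀ l : ℝ, 0 < l → Tendsto (fun t => U (t ^ l) / U t) atTop (nhds (1 + (l - 1) * c)) := by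
    intro c hcv hc l hl
    rcases le_or_gt 1 l with h1 | h1
    · exact hbig c hc l h1
    · have hl0 : l ≠ 0 := ne_of_gt hl
      have hinv1 : 1 ≤ l⁻¹ := by
        rw [le_inv_comm₀ one_pos hl]
        simpa using h1.le
      have hcomp := (hbig c hc l⁻¹ hinv1).comp (tendsto_rpow_atTop hl)
      have h2 : Tendsto (fun t : ℝ => U t / U (t ^ l)) atTop
          (nhds (1 + (l⁻¹ - 1) * c)) := by
        refine Tendsto.congr' ?_ hcomp
        filter_upwards [eventually_ge_atTop (0:ℝ)] with t ht0
        simp only [Function.comp_apply]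
        rw [← Real.rpow_mul ht0, mul_inv_cancel₀ hl0, Real.rpow_one]
      have hL : (1 + (l⁻¹ - 1) * c) ≠ 0 := by
        rcases hcv with h | h <;> subst h
        · norm_num
        · have : 0 < l⁻¹ := inv_pos.mpr hl
          intro hcon
          rw [mul_one] at hcon
          linarith
      have h3 := h2.inv₀ hL
      have hval : (1 + (l⁻¹ - 1) * c)⁻¹ = 1 + (l - 1) * c := by
        rcases hcv with h | h <;> subst h
        · norm_num
        · rw [mul_one, mul_one]
          field_simp
          ring
      rw [hval] at h3
      refine h3.congr fun t => ?_
      rw [inv_div]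
  rcases dico with h0 | h1
  · refine Or.inr ⟨?_, ?_⟩
    · intro l hl
      have h := hall 0 (Or.inl rfl) h0 l hl
      simpa using h
    · intro hP
      have hQ2 : Tendsto (fun t : ℝ => U (t ^ (2:ℝ)) / U t) atTop (nhds 1) := by
        have h := hall 0 (Or.inl rfl) h0 2 two_pos
        simpa using h
      have := tendsto_nhds_unique (hP 2 two_pos) hQ2
      norm_num at this
  · refine Or.inl ⟨?_, ?_⟩
    · intro l hl
      have h := hall 1 (Or.inr rfl) h1 l hl
      rw [show 1 + (l - 1) * 1 = l by ring] at h
      exact h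
    · intro hQ2
      have hP2 : Tendsto (fun t : ℝ => U (t ^ (2:ℝ)) / U t) atTop (nhds 2) := by
        have h := hall 1 (Or.inr rfl) h1 2 two_pos
        rw [show 1 + ((2:ℝ) - 1) * 1 = 2 by ring] at h
        exact h
      have := tendsto_nhds_unique hP2 (hQ2 2 two_pos)
      norm_num at this
end
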